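/- arXiv:1612.05931 — 7 statements merged into one kernel-verified Lean document; each statement's English description precedes it below -/
import Mathlib

section
/- Let q be a prime power, n a positive integer and 0 ≤ k ≤ n. There exists a k-normal element of F_{q^n} over F_q if and only if x^n − 1 has a monic divisor of degree n−k in F_q[x]. -/
open Polynomial

/-- For `f = Σ aᵢ xⁱ ∈ F_q[x]` and `α ∈ F_{qⁿ}`, `qmap f α = Σ aᵢ α^(qⁱ)` (the action of
the `q`-associate linearized polynomial of `f` on `α`, i.e. `f ∘ α`). -/
noncomputable def qmap {Fq Fqn : Type*} [Field Fq] [Fintype Fq] [Field Fqn] [Algebra Fq Fqn]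
    (f : Polynomial Fq) (α : Fqn) : Fqn :=
  f.sum fun i a => a • α ^ (Fintype.card Fq) ^ i

/-- The `F_q`-subspace of `F_{qⁿ}` spanned by `α, α^q, …, α^(q^(n-1))`. -/
noncomputable def conjSpan (Fq : Type*) {Fqn : Type*} [Field Fq] [Fintype Fq] [Field Fqn]
    [Algebra Fq Fqn] (n : ℕ) (α : Fqn) : Submodule Fq Fqn :=
  Submodule.span Fq ((fun i : ℕ => α ^ (Fintype.card Fq) ^ i) '' Set.Iio n)

namespace Stmt6Aux

variable {Fq Fqn : Type*} [Field Fq] [Fintype Fq] [Field Fqn] [Algebra Fq Fqn]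

lemma exists_frob : ∃ φ : Fqn →ₗ[Fq] Fqn, ∀ x, φ x = x ^ (Fintype.card Fq) := by
  have hp : Nat.Prime (ringChar Fq) := CharP.char_is_prime Fq (ringChar Fq)
  haveI : CharP Fqn (ringChar Fq) :=
    charP_of_injective_algebraMap (algebraMap Fq Fqn).injective _
  haveI : ExpChar Fqn (ringChar Fq) := ExpChar.prime hp
  haveI := Fact.mk hp
  obtain ⟨s, -, hcard⟩ := FiniteField.card Fq (ringChar Fq)
  refine ⟨{ toFun := fun x => x ^ (Fintype.card Fq), map_add' := ?_, map_smul' := ?_ },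
    fun x => rfl⟩
  · intro x y
    rw [hcard]
    exact add_pow_char_pow ..
  · intro a x
    simp only [RingHom.id_apply]
    rw [Algebra.smul_def, Algebra.smul_def, mul_pow, ← map_pow, FiniteField.pow_card]

variable {φ : Fqn →ₗ[Fq] Fqn} (hφ : ∀ x, φ x = x ^ (Fintype.card Fq))

include hφ

lemma frob_pow_apply (i : ℕ) (x : Fqn) : (φ ^ i) x = x ^ (Fintype.card Fq) ^ i := by
  induction i generalizing x with
  | zero => simp
  | succ i ih =>
    rw [pow_succ, Module.End.mul_apply, hφ, ih, ← pow_mul, ← pow_succ']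

lemma aeval_apply (f : Polynomial Fq) (α : Fqn) :
    Polynomial.aeval φ f α = qmap f α := by
  induction f using Polynomial.induction_on' with
  | add p q hp hq =>
    rw [map_add, LinearMap.add_apply, hp, hq]
    simp only [qmap]
    exact (Polynomial.sum_add_index p q (fun i a => a • α ^ (Fintype.card Fq) ^ i) (fun i => zero_smul _ _)
      (fun a b₁ b₂ => add_smul _ _ _)).symm
  | monomial i a =>
    rw [aeval_monomial, Module.End.mul_apply, Module.algebraMap_end_apply,
      frob_pow_apply hφ]
    simp only [qmap]
    exact (Polynomial.sum_monomial_index a (fun i a => a • α ^ (Fintype.card Fq) ^ i) (zero_smul _ _)).symm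

lemma frob_pow_n [Fintype Fqn] {n : ℕ} (hdeg : Module.finrank Fq Fqn = n) :
    φ ^ n = 1 := by
  have hc : Fintype.card Fqn = Fintype.card Fq ^ n := by
    rw [Module.card_eq_pow_finrank (K := Fq) (V := Fqn), hdeg]
  ext x
  rw [Module.End.one_apply, frob_pow_apply hφ, ← hc, FiniteField.pow_card]

lemma aeval_X_pow_sub_one [Fintype Fqn] {n : ℕ} (hdeg : Module.finrank Fq Fqn = n) :
    Polynomial.aeval φ (X ^ n - 1 : Polynomial Fq) = 0 := by
  rw [map_sub, map_pow, aeval_X, map_one, frob_pow_n hφ hdeg, sub_self]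

lemma finrank_ker_le [Fintype Fqn] {f : Polynomial Fq} (hf : f ≠ 0) :
    Module.finrank Fq (LinearMap.ker (Polynomial.aeval φ f)) ≤ f.natDegree := by
  classical
  have hq1 : 1 < Fintype.card Fq := Fintype.one_lt_card
  set q := Fintype.card Fq with hq
  set P : Polynomial Fqn := f.sum fun i a => C (algebraMap Fq Fqn a) * X ^ q ^ i with hP
  have heval : ∀ x : Fqn, P.eval x = Polynomial.aeval φ f x := by
    intro x
    rw [aeval_apply hφ, hP, Polynomial.sum_def, Polynomial.eval_finset_sum, qmap,
      Polynomial.sum_def]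
    refine Finset.sum_congr rfl fun i hi => ?_
    rw [eval_mul, eval_C, eval_pow, eval_X, Algebra.smul_def]
  have hinj : Function.Injective (fun i : ℕ => q ^ i) := Nat.pow_right_injective hq1
  have hcoeff : P.coeff (q ^ f.natDegree) = algebraMap Fq Fqn (f.leadingCoeff) := by
    rw [hP, Polynomial.sum_def, Polynomial.finset_sum_coeff]
    rw [Finset.sum_eq_single f.natDegree]
    · rw [coeff_C_mul, coeff_X_pow, if_pos rfl, mul_one, Polynomial.leadingCoeff]
    · intro i hi hne
      rw [coeff_C_mul, coeff_X_pow, if_neg, mul_zero]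
      exact fun h => hne (hinj h.symm)
    · intro hd
      exact absurd (Polynomial.natDegree_mem_support_of_nonzero hf) hd
  have hP0 : P ≠ 0 := by
    intro h
    rw [h, Polynomial.coeff_zero] at hcoeff
    exact (Polynomial.leadingCoeff_ne_zero.mpr hf) ((_root_.map_eq_zero _).mp hcoeff.symm)
  have hdegP : P.natDegree ≤ q ^ f.natDegree := by
    rw [hP, Polynomial.sum_def]
    refine Polynomial.natDegree_sum_le_of_forall_le _ _ fun i hi => ?_
    refine (Polynomial.natDegree_C_mul_le _ _).trans ?_
    rw [Polynomial.natDegree_X_pow]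
    exact Nat.pow_le_pow_right (le_of_lt hq1) (Polynomial.le_natDegree_of_mem_supp i hi)
  have hmem : ∀ x : LinearMap.ker (Polynomial.aeval φ f), (x : Fqn) ∈ P.roots.toFinset := by
    intro x
    rw [Multiset.mem_toFinset, Polynomial.mem_roots hP0]
    rw [Polynomial.IsRoot, heval]
    exact x.2
  have hcard : Fintype.card (LinearMap.ker (Polynomial.aeval φ f)) ≤ q ^ f.natDegree := by
    have h1 : Fintype.card (LinearMap.ker (Polynomial.aeval φ f)) ≤ P.roots.toFinset.card := by
      refine le_of_le_of_eq (Fintype.card_le_of_injective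
        (fun x => (⟨(x : Fqn), hmem x⟩ : {y // y ∈ P.roots.toFinset})) ?_)
        (Fintype.card_coe _)
      intro a b hab
      exact Subtype.ext (Subtype.mk_eq_mk.mp hab)
    refine h1.trans ((P.roots.toFinset_card_le).trans ((Polynomial.card_roots' P).trans hdegP))
  rw [Module.card_eq_pow_finrank (K := Fq) (V := LinearMap.ker (Polynomial.aeval φ f))] at hcard
  exact (Nat.pow_le_pow_iff_right hq1).mp hcard

lemma finrank_ker_eq [Fintype Fqn] {n : ℕ} (hn : 0 < n) (hdeg : Module.finrank Fq Fqn = n)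
    {f : Polynomial Fq} (hf : f ∣ (X ^ n - 1 : Polynomial Fq)) :
    Module.finrank Fq (LinearMap.ker (Polynomial.aeval φ f)) = f.natDegree := by
  classical
  haveI : FiniteDimensional Fq Fqn := inferInstance
  obtain ⟨g, hg⟩ := hf
  have hX : (X ^ n - 1 : Polynomial Fq) ≠ 0 := by
    have hm : (X ^ n - C 1 : Polynomial Fq).Monic := monic_X_pow_sub_C 1 hn.ne'
    rw [Polynomial.C_1] at hm
    exact hm.ne_zero
  have hf0 : f ≠ 0 := fun h => hX (by rw [hg, h, zero_mul])
  have hg0 : g ≠ 0 := fun h => hX (by rw [hg, h, mul_zero])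
  have hdegX : (X ^ n - 1 : Polynomial Fq).natDegree = n := by
    rw [← Polynomial.C_1]
    exact Polynomial.natDegree_X_pow_sub_C
  have hdegs : f.natDegree + g.natDegree = n := by
    rw [← Polynomial.natDegree_mul hf0 hg0, ← hg, hdegX]
  have h0 : Polynomial.aeval φ (X ^ n - 1 : Polynomial Fq) = 0 := aeval_X_pow_sub_one hφ hdeg
  have hrange : LinearMap.range (Polynomial.aeval φ g) ≤
      LinearMap.ker (Polynomial.aeval φ f) := by
    rintro x ⟨y, rfl⟩
    rw [LinearMap.mem_ker, ← Module.End.mul_apply, ← map_mul, ← hg, h0, LinearMap.zero_apply]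
  have h1 := LinearMap.finrank_range_add_finrank_ker (Polynomial.aeval φ g)
  rw [hdeg] at h1
  have h2 : Module.finrank Fq (LinearMap.range (Polynomial.aeval φ g)) ≤
      Module.finrank Fq (LinearMap.ker (Polynomial.aeval φ f)) := Submodule.finrank_mono hrange
  have h3 := finrank_ker_le hφ hf0
  have h4 := finrank_ker_le hφ hg0
  omega

/-- every element has a monic "order" polynomial dividing `X^n - 1`. -/
lemma exists_ord [Fintype Fqn] {n : ℕ} (hn : 0 < n) (hdeg : Module.finrank Fq Fqn = n)
    (α : Fqn) : ∃ h : Polynomial Fq, h.Monic ∧ h ∣ (X ^ n - 1 : Polynomial Fq) ∧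
      ∀ f, Polynomial.aeval φ f α = 0 ↔ h ∣ f := by
  classical
  let J : Ideal (Polynomial Fq) :=
    { carrier := {f | Polynomial.aeval φ f α = 0}
      add_mem' := fun {a b} ha hb => by
        simp only [Set.mem_setOf_eq] at *
        rw [map_add, LinearMap.add_apply, ha, hb, add_zero]
      zero_mem' := by simp
      smul_mem' := fun c x hx => by
        simp only [Set.mem_setOf_eq, smul_eq_mul] at *
        rw [map_mul, Module.End.mul_apply, hx, map_zero] }
  have hmemJ : ∀ f, f ∈ J ↔ Polynomial.aeval φ f α = 0 := fun f => Iff.rfl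
  have hXn : (X ^ n - 1 : Polynomial Fq) ≠ 0 := by
    have hm : (X ^ n - C 1 : Polynomial Fq).Monic := monic_X_pow_sub_C 1 hn.ne'
    rw [Polynomial.C_1] at hm
    exact hm.ne_zero
  have hXJ : (X ^ n - 1 : Polynomial Fq) ∈ J := by
    rw [hmemJ, aeval_X_pow_sub_one hφ hdeg, LinearMap.zero_apply]
  obtain ⟨g, hgen⟩ := (IsPrincipalIdealRing.principal J).principal
  rw [Ideal.submodule_span_eq] at hgen
  have hgdvd : ∀ f, f ∈ J ↔ g ∣ f := by
    intro f
    rw [hgen, Ideal.mem_span_singleton]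
  have hg0 : g ≠ 0 := by
    rintro rfl
    exact hXn (zero_dvd_iff.mp ((hgdvd _).mp hXJ))
  have hu : IsUnit (C (g.leadingCoeff)⁻¹) :=
    Polynomial.isUnit_C.mpr
      (isUnit_iff_ne_zero.mpr (inv_ne_zero (Polynomial.leadingCoeff_ne_zero.mpr hg0)))
  have hassoc : Associated (g * C (g.leadingCoeff)⁻¹) g := associated_mul_unit_left _ _ hu
  have hiff : ∀ f, Polynomial.aeval φ f α = 0 ↔ g * C (g.leadingCoeff)⁻¹ ∣ f := by
    intro f
    rw [← hmemJ, hgdvd, hassoc.dvd_iff_dvd_left]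
  exact ⟨g * C (g.leadingCoeff)⁻¹, Polynomial.monic_mul_leadingCoeff_inv hg0,
    (hiff _).mp ((hmemJ _).mp hXJ), hiff⟩

lemma finrank_conjSpan [Fintype Fqn] {n : ℕ} (hdeg : Module.finrank Fq Fqn = n)
    {α : Fqn} {h : Polynomial Fq} (hm : h.Monic) (hdvd : h ∣ (X ^ n - 1 : Polynomial Fq))
    (hord : ∀ f, Polynomial.aeval φ f α = 0 ↔ h ∣ f) (hn : 0 < n) :
    Module.finrank Fq (conjSpan Fq n α) = h.natDegree := by
  classical
  set d := h.natDegree with hd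
  set v : Fin d → Fqn := fun i => (φ ^ (i : ℕ)) α with hv
  have hXn : (X ^ n - 1 : Polynomial Fq) ≠ 0 := by
    have hmx : (X ^ n - C 1 : Polynomial Fq).Monic := monic_X_pow_sub_C 1 hn.ne'
    rw [Polynomial.C_1] at hmx
    exact hmx.ne_zero
  have hdegX : (X ^ n - 1 : Polynomial Fq).natDegree = n := by
    rw [← Polynomial.C_1]
    exact Polynomial.natDegree_X_pow_sub_C
  have hdn : d ≤ n := by
    rw [hd, ← hdegX]
    exact Polynomial.natDegree_le_of_dvd hdvd hXn
  have haev : ∀ r : Polynomial Fq,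
      Polynomial.aeval φ r α = r.sum fun i a => a • (φ ^ i) α := by
    intro r
    rw [aeval_apply hφ]
    simp only [qmap, Polynomial.sum_def]
    exact Finset.sum_congr rfl fun i _ => by rw [frob_pow_apply hφ]
  -- linear independence
  have hli : LinearIndependent Fq v := by
    rw [Fintype.linearIndependent_iff]
    intro c hc
    set r : Polynomial Fq := ∑ i : Fin d, C (c i) * X ^ (i : ℕ) with hr
    have hr0 : Polynomial.aeval φ r α = 0 := by
      rw [hr, map_sum, LinearMap.sum_apply, ← hc]
      refine Finset.sum_congr rfl fun i _ => ?_
      rw [map_mul, map_pow, aeval_X, aeval_C, Module.End.mul_apply,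
        Module.algebraMap_end_apply]
    have hdvd' : h ∣ r := (hord r).mp hr0
    have hrlt : r.degree < h.degree := by
      rw [Polynomial.degree_eq_natDegree hm.ne_zero, ← hd]
      refine lt_of_le_of_lt (Polynomial.degree_sum_le _ _)
        ((Finset.sup_lt_iff (WithBot.bot_lt_coe d)).mpr fun i _ =>
          lt_of_le_of_lt (Polynomial.degree_C_mul_X_pow_le _ _) (by exact Nat.cast_lt.mpr i.2))
    have hre : r = 0 := Polynomial.eq_zero_of_dvd_of_degree_lt hdvd' hrlt
    intro i
    have hcoeff : r.coeff (i : ℕ) = c i := by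
      rw [hr, Polynomial.finset_sum_coeff, Finset.sum_eq_single i]
      · rw [coeff_C_mul, coeff_X_pow, if_pos rfl, mul_one]
      · intro b _ hb
        rw [coeff_C_mul, coeff_X_pow, if_neg, mul_zero]
        exact fun hh => hb (Fin.ext hh.symm)
      · exact fun habs => absurd (Finset.mem_univ i) habs
    rw [← hcoeff, hre, Polynomial.coeff_zero]
  -- span equality
  have hclaim : ∀ r : Polynomial Fq,
      Polynomial.aeval φ r α ∈ Submodule.span Fq (Set.range v) := by
    intro r
    rw [← Polynomial.modByMonic_add_div r h, map_add, LinearMap.add_apply,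
      (hord (h * (r /ₘ h))).mpr ⟨_, rfl⟩, add_zero, haev]
    refine Submodule.sum_mem _ fun i hi => Submodule.smul_mem _ _ ?_
    have hne : r %ₘ h ≠ 0 := by
      intro h0
      rw [h0] at hi
      simp at hi
    have hid : i < d := by
      have h1 := Polynomial.le_natDegree_of_mem_supp i hi
      have h2 : (r %ₘ h).natDegree < d :=
        Polynomial.natDegree_lt_natDegree hne (Polynomial.degree_modByMonic_lt r hm)
      omega
    exact Submodule.subset_span ⟨⟨i, hid⟩, rfl⟩
  have hspan : conjSpan Fq n α = Submodule.span Fq (Set.range v) := by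
    apply le_antisymm
    · rw [conjSpan, Submodule.span_le]
      rintro x ⟨i, hi, rfl⟩
      have hx : α ^ (Fintype.card Fq) ^ i = Polynomial.aeval φ (X ^ i : Polynomial Fq) α := by
        rw [map_pow, aeval_X, frob_pow_apply hφ]
      show α ^ (Fintype.card Fq) ^ i ∈ (Submodule.span Fq (Set.range v) : Set Fqn)
      rw [hx]
      exact hclaim _
    · rw [Submodule.span_le]
      rintro x ⟨i, rfl⟩
      refine Submodule.subset_span ⟨(i : ℕ), lt_of_lt_of_le i.2 hdn, ?_⟩
      rw [hv]
      simp only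
      rw [frob_pow_apply hφ]
  rw [hspan, finrank_span_eq_card hli, Fintype.card_fin]

lemma exists_elt_of_ord_aux [Fintype Fqn] {n : ℕ} (hn : 0 < n)
    (hdeg : Module.finrank Fq Fqn = n) :
    ∀ d : ℕ, ∀ h : Polynomial Fq, h.natDegree ≤ d → h.Monic →
      h ∣ (X ^ n - 1 : Polynomial Fq) →
      ∃ α : Fqn, ∀ f, Polynomial.aeval φ f α = 0 ↔ h ∣ f := by
  haveI : FiniteDimensional Fq Fqn := inferInstance
  intro d
  induction d with
  | zero =>
    intro h hle hm hdvd
    have h1 : h = 1 := hm.natDegree_eq_zero.mp (Nat.le_zero.mp hle)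
    exact ⟨0, fun f => by simp [h1]⟩
  | succ d ih =>
    intro h hle hm hdvd
    by_cases hd0 : h.natDegree = 0
    · have h1 : h = 1 := hm.natDegree_eq_zero.mp hd0
      exact ⟨0, fun f => by simp [h1]⟩
    have hh0 : h ≠ 0 := hm.ne_zero
    have hnu : ¬ IsUnit h := fun hu => hd0 (Polynomial.natDegree_eq_zero_of_isUnit hu)
    obtain ⟨p₀, hp₀irr, hp₀dvd⟩ := WfDvdMonoid.exists_irreducible_factor hnu hh0
    have hp₀0 : p₀ ≠ 0 := hp₀irr.ne_zero
    have hpu : IsUnit (C (p₀.leadingCoeff)⁻¹) := Polynomial.isUnit_C.mpr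
      (isUnit_iff_ne_zero.mpr (inv_ne_zero (Polynomial.leadingCoeff_ne_zero.mpr hp₀0)))
    set p := p₀ * C (p₀.leadingCoeff)⁻¹ with hp
    have hpassoc : Associated p₀ p := (associated_mul_unit_left p₀ _ hpu).symm
    have hpmon : p.Monic := Polynomial.monic_mul_leadingCoeff_inv hp₀0
    have hpirr : Irreducible p := hpassoc.irreducible hp₀irr
    have hpdvd : p ∣ h := hpassoc.dvd_iff_dvd_left.mp hp₀dvd
    obtain ⟨e, m, hpm', hfact⟩ := WfDvdMonoid.max_power_factor hh0 hpirr
    have he : 1 ≤ e := by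
      rcases Nat.eq_zero_or_pos e with rfl | hpos
      · rw [pow_zero, one_mul] at hfact
        exact absurd (hfact ▸ hpdvd) hpm'
      · exact hpos
    have hpe0 : p ^ e ≠ 0 := pow_ne_zero _ hpmon.ne_zero
    have hm0 : m ≠ 0 := fun h0 => hh0 (by rw [hfact, h0, mul_zero])
    have hmm : m.Monic := (hpmon.pow e).of_mul_monic_left (hfact ▸ hm)
    have hppos : 0 < p.natDegree := by
      rcases Nat.eq_zero_or_pos p.natDegree with h0 | h0
      · exact absurd (hpmon.natDegree_eq_zero.mp h0 ▸ isUnit_one)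
          hpirr.not_isUnit
      · exact h0
    have hdegfact : h.natDegree = e * p.natDegree + m.natDegree := by
      rw [hfact, Polynomial.natDegree_mul hpe0 hm0, Polynomial.natDegree_pow]
    have hmdvdh : m ∣ h := ⟨p ^ e, by rw [hfact, mul_comm]⟩
    have hmdvd : m ∣ (X ^ n - 1 : Polynomial Fq) := hmdvdh.trans hdvd
    have hprod : 0 < e * p.natDegree := Nat.mul_pos he hppos
    have hmle : m.natDegree ≤ d := by omega
    obtain ⟨α₁, hα₁⟩ := ih m hmle hmm hmdvd
    -- an element of order exactly p ^ e
    have hpedvd : p ^ e ∣ (X ^ n - 1 : Polynomial Fq) := (Dvd.intro m hfact.symm).trans hdvd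
    have hpe1dvd : p ^ (e - 1) ∣ (X ^ n - 1 : Polynomial Fq) :=
      (pow_dvd_pow p (by omega)).trans hpedvd
    have hk1 := finrank_ker_eq hφ hn hdeg hpedvd
    have hk2 := finrank_ker_eq hφ hn hdeg hpe1dvd
    have hklt : Module.finrank Fq (LinearMap.ker (Polynomial.aeval φ (p ^ (e - 1)))) <
        Module.finrank Fq (LinearMap.ker (Polynomial.aeval φ (p ^ e))) := by
      rw [hk1, hk2, Polynomial.natDegree_pow, Polynomial.natDegree_pow]
      exact (Nat.mul_lt_mul_right hppos).mpr (by omega)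
    have hnle : ¬ (LinearMap.ker (Polynomial.aeval φ (p ^ e)) ≤
        LinearMap.ker (Polynomial.aeval φ (p ^ (e - 1)))) := fun hle' =>
      absurd (Submodule.finrank_mono hle') (not_le.mpr hklt)
    obtain ⟨β, hβ1, hβ2⟩ := SetLike.not_le_iff_exists.mp hnle
    obtain ⟨g, hgm, hgdvdX, hgord⟩ := exists_ord hφ hn hdeg β
    have hgpe : g ∣ p ^ e := (hgord (p ^ e)).mp (LinearMap.mem_ker.mp hβ1)
    have hprime : Prime p := UniqueFactorizationMonoid.irreducible_iff_prime.mp hpirr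
    obtain ⟨i, hie, hassoc2⟩ := (dvd_prime_pow hprime e).mp hgpe
    have hgi : g = p ^ i := Polynomial.eq_of_monic_of_associated hgm (hpmon.pow i) hassoc2
    have hieq : i = e := by
      by_contra hie'
      exact hβ2 (LinearMap.mem_ker.mpr
        ((hgord _).mpr (hgi ▸ pow_dvd_pow p (by omega : i ≤ e - 1))))
    have hβord : ∀ f, Polynomial.aeval φ f β = 0 ↔ p ^ e ∣ f := by
      intro f
      rw [hgord, hgi, hieq]
    have hcop : IsCoprime (p ^ e) m := (hpirr.coprime_iff_not_dvd.mpr hpm').pow_left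
    refine ⟨α₁ + β, fun f => ?_⟩
    constructor
    · intro hf0
      have e1 : Polynomial.aeval φ (f * p ^ e) (α₁ + β) = 0 := by
        rw [mul_comm, map_mul, Module.End.mul_apply, hf0, map_zero]
      have e2 : Polynomial.aeval φ (f * p ^ e) β = 0 := (hβord _).mpr (dvd_mul_left _ _)
      have e3 : Polynomial.aeval φ (f * p ^ e) α₁ = 0 := by
        rw [map_add, e2, add_zero] at e1
        exact e1
      have e5 : m ∣ f := hcop.symm.dvd_of_dvd_mul_right ((hα₁ _).mp e3)
      have e6 : Polynomial.aeval φ (f * m) (α₁ + β) = 0 := by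
        rw [mul_comm, map_mul, Module.End.mul_apply, hf0, map_zero]
      have e7 : Polynomial.aeval φ (f * m) α₁ = 0 := (hα₁ _).mpr (dvd_mul_left _ _)
      have e8 : Polynomial.aeval φ (f * m) β = 0 := by
        rw [map_add, e7, zero_add] at e6
        exact e6
      have e10 : p ^ e ∣ f := hcop.dvd_of_dvd_mul_right ((hβord _).mp e8)
      rw [hfact]
      exact hcop.mul_dvd e10 e5
    · intro hfdvd
      rw [hfact] at hfdvd
      have d1 : m ∣ f := (dvd_mul_left m (p ^ e)).trans hfdvd
      have d2 : p ^ e ∣ f := (dvd_mul_right (p ^ e) m).trans hfdvd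
      rw [map_add, (hα₁ _).mpr d1, (hβord _).mpr d2, add_zero]

lemma exists_elt_of_ord [Fintype Fqn] {n : ℕ} (hn : 0 < n) (hdeg : Module.finrank Fq Fqn = n)
    {h : Polynomial Fq} (hm : h.Monic) (hdvd : h ∣ (X ^ n - 1 : Polynomial Fq)) :
    ∃ α : Fqn, ∀ f, Polynomial.aeval φ f α = 0 ↔ h ∣ f :=
  exists_elt_of_ord_aux hφ hn hdeg h.natDegree h le_rfl hm hdvd

end Stmt6Aux

/-- Let `F_{qⁿ}/F_q` be an extension of finite fields of degree `n ≥ 1` and `0 ≤ k ≤ n`.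
There exists a `k`-normal element of `F_{qⁿ}` over `F_q` if and only if `xⁿ - 1` has a
monic divisor of degree `n - k` in `F_q[x]`. -/
theorem stmt_6 (Fq Fqn : Type*) [Field Fq] [Fintype Fq] [Field Fqn] [Fintype Fqn]
    [Algebra Fq Fqn] (n : ℕ) (hn : 0 < n) (hdeg : Module.finrank Fq Fqn = n)
    (k : ℕ) (hk : k ≤ n) :
    (∃ α : Fqn, Module.finrank Fq (conjSpan Fq n α) = n - k) ↔
      ∃ h : Polynomial Fq, h.Monic ∧ h ∣ (X ^ n - 1 : Polynomial Fq) ∧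
        h.natDegree = n - k := by
  obtain ⟨φ, hφ⟩ := Stmt6Aux.exists_frob (Fq := Fq) (Fqn := Fqn)
  constructor
  · rintro ⟨α, hα⟩
    obtain ⟨h, hm, hdvd, hord⟩ := Stmt6Aux.exists_ord hφ hn hdeg α
    exact ⟨h, hm, hdvd, by
      rw [← Stmt6Aux.finrank_conjSpan hφ hdeg hm hdvd hord hn, hα]⟩
  · rintro ⟨h, hm, hdvd, hd⟩
    obtain ⟨α, hord⟩ := Stmt6Aux.exists_elt_of_ord hφ hn hdeg hm hdvd
    exact ⟨α, by rw [Stmt6Aux.finrank_conjSpan hφ hdeg hm hdvd hord hn, hd]⟩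
end

section
/- Let q be a prime power with q ≡ 3 (mod 4). Then every 2-normal element β of F_{q^4} over F_q satisfies β^{q^2} = β or β^{q^2} = −β, hence β^{2(q^2−1)} = 1 and the multiplicative order of β is at most 2(q^2−1). In particular, no 2-normal element of F_{q^4} over F_q is primitive. -/
open Polynomial

/-- Let `q ≡ 3 (mod 4)` be a prime power and `F_{q⁴}/F_q` an extension of finite fields
of degree `4`.  Then every `2`-normal element `β` of `F_{q⁴}` over `F_q` satisfies
`β^(q²) = β` or `β^(q²) = -β`, hence `β^(2(q²-1)) = 1` and the multiplicative order of
`β` is at most `2(q²-1)`; in particular `β` is not primitive. -/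
theorem stmt_12 (Fq Fqn : Type*) [Field Fq] [Fintype Fq] [Field Fqn] [Fintype Fqn]
    [Algebra Fq Fqn] (q : ℕ) (hq : q = Fintype.card Fq) (hq3 : q % 4 = 3)
    (hdeg : Module.finrank Fq Fqn = 4) :
    ∀ β : Fqn, Module.finrank Fq (conjSpan Fq 4 β) = 2 →
      (β ^ q ^ 2 = β ∨ β ^ q ^ 2 = -β) ∧
      β ^ (2 * (q ^ 2 - 1)) = 1 ∧
      orderOf β ≤ 2 * (q ^ 2 - 1) ∧
      orderOf β ≠ q ^ 4 - 1 := by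
  intro β hβ2
  have hFD : FiniteDimensional Fq Fqn := Module.Finite.of_finite
  have hq1 : 1 < q := by
    rw [hq]; exact Fintype.one_lt_card
  -- characteristic facts
  set p := ringChar Fq with hp
  haveI : CharP Fq p := ringChar.charP Fq
  obtain ⟨n, hp_prime, hcard⟩ := FiniteField.card Fq p
  haveI : Fact p.Prime := ⟨hp_prime⟩
  haveI : CharP Fqn p := charP_of_injective_algebraMap (algebraMap Fq Fqn).injective p
  have hcard' : q = p ^ (n : ℕ) := by rw [hq]; exact hcard
  -- Frobenius is additive and Fq-linear
  have hadd : ∀ x y : Fqn, (x + y) ^ q = x ^ q + y ^ q := by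
    intro x y
    rw [hcard']
    exact add_pow_char_pow x y p n
  have hsmul : ∀ (k : Fq) (x : Fqn), (k • x) ^ q = k • x ^ q := by
    intro k x
    rw [Algebra.smul_def, mul_pow, ← map_pow, hq, FiniteField.pow_card, ← Algebra.smul_def]
  -- β is nonzero
  have hβ0 : β ≠ 0 := by
    rintro rfl
    have himg : (fun i : ℕ => (0 : Fqn) ^ q ^ i) '' Set.Iio 4 = {0} := by
      apply Set.eq_singleton_iff_nonempty_unique_mem.mpr
      constructor
      · exact ⟨0, ⟨0, by norm_num, by simp⟩⟩
      · rintro x ⟨i, hi, rfl⟩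
        have : q ^ i ≠ 0 := pow_ne_zero _ (by omega)
        simp [zero_pow this]
    rw [conjSpan, ← hq, himg, Submodule.span_zero_singleton] at hβ2
    simp at hβ2
  -- conjugates and shifting
  have hbq : (β : Fqn) ^ q = β ^ q ^ 1 := by rw [pow_one]
  have hs1 : (β ^ q ^ 1) ^ q = β ^ q ^ 2 := by rw [← pow_mul]; congr 1
  have hs2 : (β ^ q ^ 2) ^ q = β ^ q ^ 3 := by rw [← pow_mul]; congr 1
  have hs3 : (β ^ q ^ 3) ^ q = β ^ q ^ 4 := by rw [← pow_mul]; congr 1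
  have hfix : β ^ q ^ 4 = β := by
    have h := FiniteField.pow_card β
    rwa [Module.card_eq_pow_finrank (K := Fq) (V := Fqn), hdeg, ← hq] at h
  -- membership of conjugates in conjSpan
  have hmem : ∀ i : ℕ, i < 4 → β ^ q ^ i ∈ conjSpan Fq 4 β := by
    intro i hi
    apply Submodule.subset_span
    exact ⟨i, hi, by rw [← hq]⟩
  -- β^q is not a scalar multiple of β
  have hnot : ∀ k : Fq, β ^ q ^ 1 ≠ k • β := by
    intro k hk
    have h0 : β ^ q ^ 0 = (1 : Fq) • β := by simp
    have h2 : β ^ q ^ 2 = (k * k) • β := by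
      rw [← hs1, hk, hsmul, hbq, hk, smul_smul]
    have h3 : β ^ q ^ 3 = (k * k * k) • β := by
      rw [← hs2, h2, hsmul, hbq, hk, smul_smul]
    have hle : conjSpan Fq 4 β ≤ Submodule.span Fq {β} := by
      rw [conjSpan]
      apply Submodule.span_le.mpr
      rintro x ⟨i, hi, rfl⟩
      simp only [Set.mem_Iio] at hi
      rw [← hq]
      interval_cases i
      · exact Submodule.mem_span_singleton.mpr ⟨1, by simp⟩
      · exact Submodule.mem_span_singleton.mpr ⟨k, hk.symm⟩
      · exact Submodule.mem_span_singleton.mpr ⟨k * k, h2.symm⟩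
      · exact Submodule.mem_span_singleton.mpr ⟨k * k * k, h3.symm⟩
    have := Submodule.finrank_mono hle
    rw [hβ2, finrank_span_singleton hβ0] at this
    omega
  -- β, β^q are linearly independent
  have hpair : ∀ s t : Fq, s • β + t • (β ^ q ^ 1) = 0 → s = 0 ∧ t = 0 := by
    intro s t h
    by_cases ht : t = 0
    · subst ht
      rw [zero_smul, add_zero] at h
      rcases smul_eq_zero.mp h with hs | hβ
      · exact ⟨hs, rfl⟩
      · exact absurd hβ hβ0
    · exfalso
      apply hnot (-(t⁻¹ * s))
      have h1 : t • (β ^ q ^ 1) = (-s) • β := by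
        rw [neg_smul, eq_neg_iff_add_eq_zero, add_comm]; exact h
      have h2 : t⁻¹ • (t • (β ^ q ^ 1)) = t⁻¹ • ((-s) • β) := by rw [h1]
      rw [smul_smul, smul_smul, inv_mul_cancel₀ ht, one_smul] at h2
      rw [h2]; congr 1; ring
  have hLI : LinearIndependent Fq ![β, β ^ q ^ 1] := LinearIndependent.pair_iff.mpr hpair
  -- the span of β, β^q equals conjSpan
  have hrange : Set.range ![β, β ^ q ^ 1] = {β, β ^ q ^ 1} := by
    simp only [Matrix.range_cons, Matrix.range_empty, Set.union_empty, Set.union_singleton,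
      Set.singleton_union]
    first
    | rfl
    | exact Set.pair_comm _ _
  have hS2 : Module.finrank Fq (Submodule.span Fq ({β, β ^ q ^ 1} : Set Fqn)) = 2 := by
    rw [← hrange, finrank_span_eq_card hLI, Fintype.card_fin]
  have hle : Submodule.span Fq ({β, β ^ q ^ 1} : Set Fqn) ≤ conjSpan Fq 4 β := by
    apply Submodule.span_le.mpr
    rintro x (rfl | rfl)
    · have := hmem 0 (by norm_num); simpa using this
    · exact hmem 1 (by norm_num)
  have heq : Submodule.span Fq ({β, β ^ q ^ 1} : Set Fqn) = conjSpan Fq 4 β :=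
    Submodule.eq_of_le_of_finrank_le hle (by rw [hβ2, hS2])
  -- write β^{q²} in terms of β, β^q
  have hmem2 : β ^ q ^ 2 ∈ Submodule.span Fq ({β, β ^ q ^ 1} : Set Fqn) := by
    rw [heq]; exact hmem 2 (by norm_num)
  obtain ⟨a, b, hab⟩ := Submodule.mem_span_pair.mp hmem2
  have h2 : β ^ q ^ 2 = a • β + b • (β ^ q ^ 1) := hab.symm
  -- iterate Frobenius
  have h3 : β ^ q ^ 3 = (b * a) • β + (a + b * b) • (β ^ q ^ 1) := by
    rw [← hs2, h2, hadd, hsmul, hsmul, hbq, hs1, h2]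
    module
  have h4 : β = ((a + b * b) * a) • β + (b * a + (a + b * b) * b) • (β ^ q ^ 1) := by
    have h4' : β ^ q ^ 4 = ((a + b * b) * a) • β + (b * a + (a + b * b) * b) • (β ^ q ^ 1) := by
      rw [← hs3, h3, hadd, hsmul, hsmul, hbq, hs1, h2]
      module
    rw [hfix] at h4'
    exact h4'
  have h5 : ((a + b * b) * a) • β + (b * a + (a + b * b) * b) • (β ^ q ^ 1) - β = 0 :=
    sub_eq_zero.mpr h4.symm
  have hzero : ((a + b * b) * a - 1) • β + (b * a + (a + b * b) * b) • (β ^ q ^ 1) = 0 := by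
    calc ((a + b * b) * a - 1) • β + (b * a + (a + b * b) * b) • (β ^ q ^ 1)
        = ((a + b * b) * a) • β + (b * a + (a + b * b) * b) • (β ^ q ^ 1) - β := by module
      _ = 0 := h5
  obtain ⟨e1, e2⟩ := hpair _ _ hzero
  have e1' : (a + b * b) * a = 1 := by linear_combination e1
  -- case analysis
  have hkey : β ^ q ^ 2 = β ∨ β ^ q ^ 2 = -β := by
    by_cases hb : b = 0
    · subst hb
      have ha2 : a * a = 1 := by linear_combination e1
      have hfac : (a - 1) * (a + 1) = 0 := by linear_combination ha2
      rcases mul_eq_zero.mp hfac with h | h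
      · left
        have ha : a = 1 := by linear_combination h
        rw [h2, ha, one_smul, zero_smul, add_zero]
      · right
        have ha : a = -1 := by linear_combination h
        rw [h2, ha, zero_smul, add_zero, neg_smul, one_smul]
    · exfalso
      have hfac : b * (2 * a + b * b) = 0 := by linear_combination e2
      have h2a : 2 * a + b * b = 0 := (mul_eq_zero.mp hfac).resolve_left hb
      have hsq : a * a = -1 := by linear_combination (-1 : Fq) * e1' + a * h2a
      have : IsSquare (-1 : Fq) := ⟨a, hsq.symm⟩
      rw [FiniteField.isSquare_neg_one_iff, ← hq] at this
      exact this hq3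
  -- conclusions
  have hq2 : 1 ≤ q ^ 2 := Nat.one_le_pow _ _ (by omega)
  have hsplit : β ^ q ^ 2 = β ^ (q ^ 2 - 1) * β := by
    rw [← pow_succ]; congr 1; omega
  have heps : β ^ (q ^ 2 - 1) = 1 ∨ β ^ (q ^ 2 - 1) = -1 := by
    rcases hkey with h | h
    · left; exact mul_right_cancel₀ hβ0 (by rw [one_mul, ← hsplit, h])
    · right; exact mul_right_cancel₀ hβ0 (by rw [neg_one_mul, ← hsplit, h])
  have hpow : β ^ (2 * (q ^ 2 - 1)) = 1 := by
    rw [mul_comm, pow_mul]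
    rcases heps with h | h <;> rw [h]
    · exact one_pow 2
    · exact neg_one_sq
  have hq3' : 3 ≤ q := by omega
  have h9 : 9 ≤ q ^ 2 := by nlinarith
  have hordle : orderOf β ≤ 2 * (q ^ 2 - 1) :=
    orderOf_le_of_pow_eq_one (by omega) hpow
  have hlt : 2 * (q ^ 2 - 1) < q ^ 4 - 1 := by
    obtain ⟨A, hA⟩ : ∃ A, A = q ^ 2 := ⟨_, rfl⟩
    have h4A : q ^ 4 = A * A := by rw [hA]; ring
    obtain ⟨B, hB⟩ : ∃ B, B = A * A := ⟨_, rfl⟩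
    have h9A : 9 ≤ A := by rw [hA]; exact h9
    have h9B : 9 * A ≤ B := by rw [hB]; nlinarith
    rw [← hA, h4A, ← hB]
    omega
  exact ⟨hkey, hpow, hordle, by omega⟩
end

section
/- Let q be a prime power, n a positive integer and 0 ≤ k ≤ n. If x^n − 1 has a monic divisor of degree n−k in F_q[x], then the number N_k of k-normal elements of F_{q^n} over F_q satisfies N_k ≥ (q−1)^{n−k}. -/
open Polynomial

set_option linter.unusedSectionVars false
set_option linter.unusedVariables false

section Frob
variable (Fq Fqn : Type*) [Field Fq] [Fintype Fq] [Field Fqn] [Algebra Fq Fqn]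

noncomputable def frobL : Fqn →ₗ[Fq] Fqn where
  toFun γ := γ ^ Fintype.card Fq
  map_add' x y := by
    let p := ringChar Fq
    haveI : CharP Fq p := ringChar.charP Fq
    obtain ⟨m, hp, hcard⟩ := FiniteField.card Fq p
    haveI : CharP Fqn p := charP_of_injective_algebraMap (algebraMap Fq Fqn).injective p
    haveI : Fact p.Prime := ⟨hp⟩
    simp only [hcard]
    exact add_pow_char_pow ..
  map_smul' a γ := by
    simp only [Algebra.smul_def, mul_pow, RingHom.id_apply]
    rw [← map_pow, FiniteField.pow_card]

variable {Fq Fqn}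

lemma frobL_apply (γ : Fqn) : frobL Fq Fqn γ = γ ^ Fintype.card Fq := rfl

lemma frobL_pow_apply (i : ℕ) (γ : Fqn) :
    ((frobL Fq Fqn) ^ i) γ = γ ^ (Fintype.card Fq) ^ i := by
  induction i generalizing γ with
  | zero => simp
  | succ i ih =>
    rw [pow_succ, Module.End.mul_apply, ih, frobL_apply, ← pow_mul, pow_succ']

lemma aeval_frobL (f : Polynomial Fq) (γ : Fqn) :
    aeval (frobL Fq Fqn) f γ = qmap f γ := by
  rw [aeval_endomorphism, qmap]
  simp only [frobL_pow_apply]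

lemma aeval_mul_apply (f g : Polynomial Fq) (γ : Fqn) :
    aeval (frobL Fq Fqn) (f * g) γ
      = aeval (frobL Fq Fqn) f (aeval (frobL Fq Fqn) g γ) := by
  rw [map_mul]; rfl

variable [Fintype Fqn]

lemma aeval_X_pow_sub_one {n : ℕ} (hdeg : Module.finrank Fq Fqn = n)
    (γ : Fqn) : aeval (frobL Fq Fqn) ((X : Polynomial Fq) ^ n - 1) γ = 0 := by
  have hcard : Fintype.card Fqn = Fintype.card Fq ^ n := by
    rw [Module.card_eq_pow_finrank (K := Fq) (V := Fqn), hdeg]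
  rw [map_sub, map_pow, map_one]
  simp only [LinearMap.sub_apply, Module.End.one_apply, aeval_X]
  rw [frobL_pow_apply, ← hcard, FiniteField.pow_card, sub_self]
end Frob

section Count
variable {Fq Fqn : Type*} [Field Fq] [Fintype Fq] [Field Fqn] [Algebra Fq Fqn] [Fintype Fqn]

/-- Kernel of the linearized polynomial of `f`, as a set. -/
def Kset (Fqn : Type*) [Field Fqn] [Algebra Fq Fqn] (f : Polynomial Fq) : Set Fqn :=
  {β | aeval (frobL Fq Fqn) f β = 0}

lemma Kset_card_le (f : Polynomial Fq) (hf : f.Monic) :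
    (Kset Fqn f).ncard ≤ Fintype.card Fq ^ f.natDegree := by
  classical
  set q := Fintype.card Fq with hq
  have hq2 : 2 ≤ q := Fintype.one_lt_card
  set m := f.natDegree with hm
  set P : Polynomial Fqn :=
    ∑ i ∈ f.support, C (algebraMap Fq Fqn (f.coeff i)) * X ^ (q ^ i) with hP
  have heval : ∀ β : Fqn, P.eval β = aeval (frobL Fq Fqn) f β := by
    intro β
    rw [aeval_endomorphism, Polynomial.sum, hP, eval_finset_sum]
    refine Finset.sum_congr rfl fun i _ => ?_
    rw [eval_mul, eval_pow, eval_C, eval_X, frobL_pow_apply, Algebra.smul_def]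
  have hcoeff : P.coeff (q ^ m) = 1 := by
    rw [hP, finset_sum_coeff, Finset.sum_eq_single m]
    · simp [coeff_C_mul, coeff_X_pow, hm, hf.coeff_natDegree]
    · intro i _ hne
      have : q ^ m ≠ q ^ i := fun h => hne (Nat.pow_right_injective hq2 h).symm
      simp [coeff_C_mul, coeff_X_pow, this]
    · intro hm'
      exact absurd (mem_support_iff.mpr (by simp [hm, hf.coeff_natDegree])) hm'
  have hP0 : P ≠ 0 := fun h => by simp [h] at hcoeff
  have hdegP : P.natDegree ≤ q ^ m := by
    apply natDegree_sum_le_of_forall_le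
    intro i hi
    refine (natDegree_C_mul_le _ _).trans ?_
    rw [natDegree_X_pow]
    exact Nat.pow_le_pow_right (by omega) (le_natDegree_of_mem_supp i hi)
  have hsub : Kset Fqn f ⊆ ↑P.roots.toFinset := by
    intro β hβ
    simp only [Finset.coe_sort_coe, Multiset.mem_toFinset, Finset.mem_coe, mem_roots hP0]
    exact (heval β).trans hβ
  calc (Kset Fqn f).ncard ≤ (P.roots.toFinset : Finset Fqn).card := by
        rw [← Set.ncard_coe_finset]; exact Set.ncard_le_ncard hsub (Finset.finite_toSet _)
    _ ≤ Multiset.card P.roots := Multiset.toFinset_card_le _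
    _ ≤ P.natDegree := card_roots' P
    _ ≤ q ^ m := hdegP

lemma monic_X_pow_sub_one {n : ℕ} (hn : 0 < n) : ((X : Polynomial Fq) ^ n - 1).Monic := by
  have := monic_X_pow_sub_C (1 : Fq) hn.ne'
  rwa [map_one] at this

lemma natDegree_X_pow_sub_one' {n : ℕ} (hn : 0 < n) :
    ((X : Polynomial Fq) ^ n - 1).natDegree = n := by
  have := natDegree_X_pow_sub_C (n := n) (r := (1 : Fq))
  rwa [map_one] at this

lemma Kset_card_eq {n : ℕ} (hn : 0 < n) (hdeg : Module.finrank Fq Fqn = n)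
    {f : Polynomial Fq} (hf : f.Monic) (hdvd : f ∣ X ^ n - 1) :
    (Kset Fqn f).ncard = Fintype.card Fq ^ f.natDegree := by
  obtain ⟨g, hfg⟩ := hdvd
  set q := Fintype.card Fq with hq
  have hg : g.Monic := hf.of_mul_monic_left (hfg ▸ monic_X_pow_sub_one hn)
  have hdegs : f.natDegree + g.natDegree = n := by
    rw [← hf.natDegree_mul hg, ← hfg, natDegree_X_pow_sub_one' hn]
  refine le_antisymm (Kset_card_le f hf) ?_
  set φ := frobL Fq Fqn with hφ
  have hrange : ∀ β : Fqn, aeval φ f (aeval φ g β) = 0 := by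
    intro β; rw [← aeval_mul_apply, ← hfg, aeval_X_pow_sub_one hdeg]
  have h1 : Nat.card Fqn
      = Nat.card (LinearMap.ker (aeval φ g)) * Nat.card (Fqn ⧸ LinearMap.ker (aeval φ g)) :=
    Submodule.card_eq_card_quotient_mul_card _
  have h2 : Nat.card (Fqn ⧸ LinearMap.ker (aeval φ g))
      = Nat.card (LinearMap.range (aeval φ g)) :=
    Nat.card_congr (aeval φ g).quotKerEquivRange.toEquiv
  have hsub : (LinearMap.range (aeval φ g) : Set Fqn) ⊆ Kset Fqn f := by
    rintro β ⟨γ, rfl⟩; exact hrange γ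
  have h3 : Nat.card (LinearMap.range (aeval φ g)) ≤ (Kset Fqn f).ncard := by
    rw [show Nat.card (LinearMap.range (aeval φ g))
        = ((LinearMap.range (aeval φ g) : Set Fqn)).ncard from Nat.card_coe_set_eq _]
    exact Set.ncard_le_ncard hsub (Set.toFinite _)
  have h4 : Nat.card (LinearMap.ker (aeval φ g)) ≤ q ^ g.natDegree := by
    rw [show Nat.card (LinearMap.ker (aeval φ g))
        = ((LinearMap.ker (aeval φ g) : Set Fqn)).ncard from Nat.card_coe_set_eq _]
    exact Kset_card_le g hg
  have hcardFqn : Nat.card Fqn = q ^ n := by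
    rw [Nat.card_eq_fintype_card, Module.card_eq_pow_finrank (K := Fq) (V := Fqn), hdeg]
  have key : q ^ f.natDegree * q ^ g.natDegree ≤ (Kset Fqn f).ncard * q ^ g.natDegree := by
    calc q ^ f.natDegree * q ^ g.natDegree = q ^ n := by rw [← pow_add, hdegs]
      _ = Nat.card (LinearMap.ker (aeval φ g)) * Nat.card (Fqn ⧸ LinearMap.ker (aeval φ g)) := by
          rw [← h1, hcardFqn]
      _ ≤ q ^ g.natDegree * (Kset Fqn f).ncard := by
          rw [h2]; exact Nat.mul_le_mul h4 h3
      _ = (Kset Fqn f).ncard * q ^ g.natDegree := mul_comm _ _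
  exact Nat.le_of_mul_le_mul_right key (pow_pos (by positivity) _)

end Count

section Order
variable {Fq Fqn : Type*} [Field Fq] [Fintype Fq] [Field Fqn] [Algebra Fq Fqn] [Fintype Fqn]

/-- Elements whose Frobenius-order is exactly `f`. -/
def Oset (Fqn : Type*) [Field Fqn] [Algebra Fq Fqn] (f : Polynomial Fq) : Set Fqn :=
  {β | aeval (frobL Fq Fqn) f β = 0 ∧
    ∀ g : Polynomial Fq, aeval (frobL Fq Fqn) g β = 0 → f ∣ g}

lemma Oset_one : Oset Fqn (1 : Polynomial Fq) = {0} := by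
  ext β
  simp only [Oset, Set.mem_setOf_eq, map_one, Module.End.one_apply, Set.mem_singleton_iff]
  exact ⟨fun h => h.1, fun h => ⟨h, fun g _ => one_dvd g⟩⟩

lemma nat_arith {q d e : ℕ} (hq : 2 ≤ q) (hd : 1 ≤ d) (he : 1 ≤ e) :
    (q - 1) ^ (e * d) ≤ q ^ (e * d) - q ^ ((e - 1) * d) := by
  set M := e * d with hM
  have hM1 : 1 ≤ M := Nat.one_le_iff_ne_zero.mpr (by positivity)
  have hed : (e - 1) * d = M - d := by rw [hM, Nat.sub_mul, one_mul]
  have hdM : d ≤ M := by rw [hM]; exact Nat.le_mul_of_pos_left d he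
  have h1 : (e - 1) * d ≤ M - 1 := by omega
  calc (q - 1) ^ M = (q - 1) ^ (M - 1) * (q - 1) := by
        rw [← pow_succ]; congr 1; omega
    _ ≤ q ^ (M - 1) * (q - 1) := Nat.mul_le_mul_right _ (Nat.pow_le_pow_left (by omega) _)
    _ = q ^ (M - 1) * q - q ^ (M - 1) * 1 := by rw [Nat.mul_sub]
    _ = q ^ M - q ^ (M - 1) := by rw [mul_one, ← pow_succ]; congr 2; omega
    _ ≤ q ^ M - q ^ ((e - 1) * d) :=
        Nat.sub_le_sub_left (Nat.pow_le_pow_right (by omega) h1) _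

lemma Oset_prime_pow {n : ℕ} (hn : 0 < n) (hdeg : Module.finrank Fq Fqn = n)
    {p : Polynomial Fq} (hp : p.Monic) (hirr : Irreducible p) {e : ℕ} (he : 1 ≤ e)
    (hdvd : p ^ e ∣ X ^ n - 1) :
    (Fintype.card Fq - 1) ^ (p ^ e).natDegree ≤ (Oset Fqn (p ^ e)).ncard := by
  set q := Fintype.card Fq with hq
  have hq2 : 2 ≤ q := Fintype.one_lt_card
  have hd : 1 ≤ p.natDegree := hirr.natDegree_pos
  classical
  have hprime : Prime p := hirr.prime
  set φ := frobL Fq Fqn with hφ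
  have hOeq : Oset Fqn (p ^ e) = Kset Fqn (p ^ e) \ Kset Fqn (p ^ (e - 1)) := by
    ext β
    constructor
    · rintro ⟨hann, hmin⟩
      refine ⟨hann, fun hmem => ?_⟩
      have hdvd' : p ^ e ∣ p ^ (e - 1) := hmin _ hmem
      have hle := natDegree_le_of_dvd hdvd' (pow_ne_zero _ hp.ne_zero)
      rw [natDegree_pow, natDegree_pow] at hle
      have := Nat.mul_lt_mul_of_lt_of_le (Nat.sub_lt he Nat.one_pos) (le_refl p.natDegree) hd
      omega
    · rintro ⟨hke, hne⟩
      refine ⟨hke, fun g hg => ?_⟩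
      set D := EuclideanDomain.gcd g (p ^ e) with hD
      have hDβ : aeval φ D β = 0 := by
        rw [hD, EuclideanDomain.gcd_eq_gcd_ab, map_add, LinearMap.add_apply,
          mul_comm g, mul_comm (p ^ e), aeval_mul_apply, aeval_mul_apply, hg, hke,
          map_zero, map_zero, add_zero]
      obtain ⟨i, hie, hassoc⟩ := (dvd_prime_pow hprime e).mp (EuclideanDomain.gcd_dvd_right g (p ^ e))
      by_cases hi : i = e
      · rw [hi] at hassoc
        exact (hassoc.symm.dvd).trans (EuclideanDomain.gcd_dvd_left g (p ^ e))
      · exfalso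
        apply hne
        have hpi : aeval φ (p ^ i) β = 0 := by
          obtain ⟨u, hu⟩ := hassoc
          rw [← hu, mul_comm, aeval_mul_apply, hDβ, map_zero]
        show aeval φ (p ^ (e - 1)) β = 0
        rw [show p ^ (e - 1) = p ^ (e - 1 - i) * p ^ i from by rw [← pow_add]; congr 1; omega,
          aeval_mul_apply, hpi, map_zero]
  have hsub : Kset Fqn (p ^ (e - 1)) ⊆ Kset Fqn (p ^ e) := by
    intro β hβ
    show aeval φ (p ^ e) β = 0
    rw [show p ^ e = p ^ (e - (e - 1)) * p ^ (e - 1) from by rw [← pow_add]; congr 1; omega,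
      aeval_mul_apply, hβ, map_zero]
  rw [hOeq, Set.ncard_diff hsub (Set.toFinite _),
    Kset_card_eq hn hdeg (hp.pow _) hdvd,
    Kset_card_eq hn hdeg (hp.pow _) ((pow_dvd_pow p (by omega : e - 1 ≤ e)).trans hdvd),
    natDegree_pow, natDegree_pow]
  exact nat_arith hq2 hd he

lemma Oset_coprime {f g : Polynomial Fq} (hcop : IsCoprime f g) :
    (Oset Fqn f).ncard * (Oset Fqn g).ncard ≤ (Oset Fqn (f * g)).ncard := by
  classical
  set φ := frobL Fq Fqn with hφ
  have mem : ∀ β ∈ Oset Fqn f, ∀ γ ∈ Oset Fqn g, β + γ ∈ Oset Fqn (f * g) := by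
    rintro β ⟨hβ0, hβm⟩ γ ⟨hγ0, hγm⟩
    have h1 : aeval φ (f * g) β = 0 := by rw [mul_comm, aeval_mul_apply, hβ0, map_zero]
    have h2 : aeval φ (f * g) γ = 0 := by rw [aeval_mul_apply, hγ0, map_zero]
    refine ⟨by rw [map_add, h1, h2, add_zero], fun e he => ?_⟩
    have hef : f ∣ e := by
      have h3 : aeval φ (e * g) β = 0 := by
        have h4 : aeval φ (e * g) (β + γ) = 0 := by
          rw [mul_comm, aeval_mul_apply, he, map_zero]
        have h5 : aeval φ (e * g) γ = 0 := by rw [aeval_mul_apply, hγ0, map_zero]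
        calc aeval φ (e * g) β = aeval φ (e * g) (β + γ) - aeval φ (e * g) γ := by
              rw [map_add]; ring
          _ = 0 := by rw [h4, h5, sub_zero]
      exact hcop.dvd_of_dvd_mul_right (hβm _ h3)
    have heg : g ∣ e := by
      have h3 : aeval φ (e * f) γ = 0 := by
        have h4 : aeval φ (e * f) (β + γ) = 0 := by
          rw [mul_comm, aeval_mul_apply, he, map_zero]
        have h5 : aeval φ (e * f) β = 0 := by rw [aeval_mul_apply, hβ0, map_zero]
        calc aeval φ (e * f) γ = aeval φ (e * f) (β + γ) - aeval φ (e * f) β := by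
              rw [map_add]; ring
          _ = 0 := by rw [h4, h5, sub_zero]
      exact hcop.symm.dvd_of_dvd_mul_right (hγm _ h3)
    exact hcop.mul_dvd hef heg
  obtain ⟨u, v, huv⟩ := hcop
  have recov : ∀ β ∈ Oset Fqn f, ∀ γ ∈ Oset Fqn g, aeval φ (v * g) (β + γ) = β := by
    rintro β ⟨hβ0, -⟩ γ ⟨hγ0, -⟩
    rw [map_add]
    have h5 : aeval φ (v * g) γ = 0 := by rw [aeval_mul_apply, hγ0, map_zero]
    have h6 : aeval φ (v * g) β = β := by
      have h8 : aeval φ (u * f) β = 0 := by rw [aeval_mul_apply, hβ0, map_zero]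
      have h7 : aeval φ (u * f + v * g) β = β := by rw [huv, map_one, Module.End.one_apply]
      rw [map_add, LinearMap.add_apply, h8, zero_add] at h7
      exact h7
    rw [h5, h6, add_zero]
  have hcard : Nat.card (Oset Fqn f × Oset Fqn g) ≤ Nat.card (Oset Fqn (f * g)) := by
    apply Nat.card_le_card_of_injective
      (fun bc : Oset Fqn f × Oset Fqn g =>
        (⟨bc.1.1 + bc.2.1, mem _ bc.1.2 _ bc.2.2⟩ : Oset Fqn (f * g)))
    rintro ⟨⟨β, hβ⟩, ⟨γ, hγ⟩⟩ ⟨⟨β', hβ'⟩, ⟨γ', hγ'⟩⟩ hEq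
    simp only [Subtype.mk.injEq] at hEq
    have hββ' : β = β' := by rw [← recov β hβ γ hγ, hEq, recov β' hβ' γ' hγ']
    have hγγ' : γ = γ' := by subst hββ'; exact add_left_cancel hEq
    simp [Prod.ext_iff, Subtype.ext_iff, hββ', hγγ']
  rwa [Nat.card_prod, Nat.card_coe_set_eq, Nat.card_coe_set_eq,
    Nat.card_coe_set_eq] at hcard

lemma Oset_count {n : ℕ} (hn : 0 < n) (hdeg : Module.finrank Fq Fqn = n) :
    ∀ m (f : Polynomial Fq), f.natDegree = m → f.Monic → f ∣ X ^ n - 1 →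
      (Fintype.card Fq - 1) ^ f.natDegree ≤ (Oset Fqn f).ncard := by
  intro m
  induction m using Nat.strong_induction_on with
  | _ m ih =>
    intro f hfm hf hdvd
    rcases Nat.eq_zero_or_pos m with hm0 | hmpos
    · have h1 : f = 1 := hf.natDegree_eq_zero.mp (hfm.trans hm0)
      subst h1
      rw [Oset_one]
      simp
    · have hnu : ¬IsUnit f := not_isUnit_of_natDegree_pos f (by omega)
      obtain ⟨p, hpm, hpirr, hpdvd⟩ := f.exists_monic_irreducible_factor hnu
      classical
      set e := Nat.findGreatest (fun j => p ^ j ∣ f) f.natDegree with he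
      have hd1 : 1 ≤ p.natDegree := hpirr.natDegree_pos
      have hf0 : f ≠ 0 := hf.ne_zero
      have he1 : 1 ≤ e := Nat.le_findGreatest (by omega) (by simpa using hpdvd)
      have hpe : p ^ e ∣ f :=
        Nat.findGreatest_spec (P := fun j => p ^ j ∣ f) (m := 1) (by omega) (by simpa using hpdvd)
      have hnot : ¬ p ^ (e + 1) ∣ f := by
        intro hcon
        have hdegle := natDegree_le_of_dvd hcon hf0
        rw [natDegree_pow] at hdegle
        by_cases hcase : e + 1 ≤ f.natDegree
        · exact Nat.findGreatest_is_greatest (lt_add_one e) hcase hcon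
        · have h2 : e + 1 ≤ (e + 1) * p.natDegree := Nat.le_mul_of_pos_right _ hd1
          omega
      obtain ⟨g, hg⟩ := hpe
      have hgm : g.Monic := (hpm.pow _).of_mul_monic_left (hg ▸ hf)
      have hpg : ¬ p ∣ g := by
        intro hcon
        exact hnot (by rw [hg, pow_succ]; exact mul_dvd_mul (dvd_refl _) hcon)
      have hcop : IsCoprime (p ^ e) g := (hpirr.coprime_iff_not_dvd.mpr hpg).pow_left
      have hdegf : f.natDegree = e * p.natDegree + g.natDegree := by
        rw [hg, (hpm.pow _).natDegree_mul hgm, natDegree_pow]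
      have hgdvd : g ∣ X ^ n - 1 := (Dvd.intro_left _ hg.symm).trans hdvd
      have hpedvd : p ^ e ∣ X ^ n - 1 := (Dvd.intro _ hg.symm).trans hdvd
      have hed1 : 1 ≤ e * p.natDegree := Nat.mul_le_mul he1 hd1
      have hglt : g.natDegree < m := by omega
      have IH := ih g.natDegree hglt g rfl hgm hgdvd
      have Hpe := Oset_prime_pow (Fqn := Fqn) hn hdeg hpm hpirr he1 hpedvd
      calc (Fintype.card Fq - 1) ^ f.natDegree
          = (Fintype.card Fq - 1) ^ (p ^ e).natDegree
            * (Fintype.card Fq - 1) ^ g.natDegree := by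
            rw [natDegree_pow, ← pow_add, hdegf]
        _ ≤ (Oset Fqn (p ^ e)).ncard * (Oset Fqn g).ncard := Nat.mul_le_mul Hpe IH
        _ ≤ (Oset Fqn (p ^ e * g)).ncard := Oset_coprime hcop
        _ = (Oset Fqn f).ncard := by rw [← hg]

lemma finrank_conjSpan {n : ℕ} (hdeg : Module.finrank Fq Fqn = n)
    {h : Polynomial Fq} (hm : h.Monic) (hle : h.natDegree ≤ n) {β : Fqn}
    (hβ : β ∈ Oset Fqn h) :
    Module.finrank Fq (conjSpan Fq n β) = h.natDegree := by
  classical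
  set q := Fintype.card Fq with hq
  have hq1 : 0 < q := Fintype.card_pos
  set φ := frobL Fq Fqn with hφ
  obtain ⟨hβ0, hβm⟩ := hβ
  by_cases hβz : β = 0
  · subst hβz
    have h1 : h = 1 := hm.eq_one_of_isUnit (isUnit_of_dvd_one (hβm 1 (by
      rw [map_one, Module.End.one_apply])))
    subst h1
    have himg : (fun i : ℕ => (0 : Fqn) ^ q ^ i) '' Set.Iio n ⊆ {0} := by
      rintro x ⟨i, hi, rfl⟩
      simp [zero_pow (pow_pos hq1 i).ne']
    have hbot : conjSpan Fq n (0 : Fqn) = ⊥ := by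
      apply le_bot_iff.mp
      rw [conjSpan, Submodule.span_le]
      intro x hx
      rcases himg hx with rfl
      simp
    rw [hbot, natDegree_one, finrank_bot]
  · have hne1 : h ≠ 1 := by
      intro h1
      rw [h1, map_one, Module.End.one_apply] at hβ0
      exact hβz hβ0
    set d := h.natDegree with hd
    have hdpos : 0 < d := by
      rcases Nat.eq_zero_or_pos d with h0 | h0
      · exact absurd (hm.natDegree_eq_zero.mp h0) hne1
      · exact h0
    set b : Fin d → Fqn := fun i => β ^ q ^ (i : ℕ) with hb
    have aux : ∀ c : Polynomial Fq, c.natDegree < d →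
        aeval φ c β ∈ Submodule.span Fq (Set.range b) := by
      intro c hc
      rw [aeval_endomorphism, Polynomial.sum]
      refine Submodule.sum_mem _ fun i hi => Submodule.smul_mem _ _ ?_
      have hid : i < d := lt_of_le_of_lt (le_natDegree_of_mem_supp i hi) hc
      rw [frobL_pow_apply]
      exact Submodule.subset_span ⟨⟨i, hid⟩, rfl⟩
    have hspan : conjSpan Fq n β = Submodule.span Fq (Set.range b) := by
      apply le_antisymm
      · rw [conjSpan, Submodule.span_le]
        rintro _ ⟨j, hj, rfl⟩
        have hkey : β ^ q ^ j = aeval φ ((X : Polynomial Fq) ^ j %ₘ h) β := by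
          have hXj : (X : Polynomial Fq) ^ j %ₘ h + h * ((X : Polynomial Fq) ^ j /ₘ h)
              = X ^ j := modByMonic_add_div _ h
          have e1 : β ^ q ^ j = aeval φ ((X : Polynomial Fq) ^ j) β := by
            rw [map_pow, aeval_X, frobL_pow_apply]
          rw [e1]
          conv_lhs => rw [← hXj]
          rw [map_add, LinearMap.add_apply,
            mul_comm h ((X : Polynomial Fq) ^ j /ₘ h), aeval_mul_apply,
            hβ0, map_zero, add_zero]
        show β ^ q ^ j ∈ (Submodule.span Fq (Set.range b) : Set Fqn)
        simp only [SetLike.mem_coe]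
        rw [hkey]
        exact aux _ (natDegree_modByMonic_lt _ hm hne1)
      · rw [Submodule.span_le]
        rintro _ ⟨i, rfl⟩
        exact Submodule.subset_span ⟨(i : ℕ), lt_of_lt_of_le i.2 hle, rfl⟩
    have hlin : LinearIndependent Fq b := by
      rw [Fintype.linearIndependent_iff]
      intro c hc i
      set cp : Polynomial Fq := ∑ j : Fin d, C (c j) * X ^ (j : ℕ) with hcp
      have hterm : ∀ j : Fin d, aeval φ (C (c j) * X ^ (j : ℕ)) β = c j • b j := by
        intro j
        rw [map_mul, aeval_C, map_pow, aeval_X, Module.End.mul_apply, frobL_pow_apply,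
          Module.algebraMap_end_apply]
      have hcpβ : aeval φ cp β = 0 := by
        rw [hcp, map_sum, LinearMap.sum_apply]
        rw [Finset.sum_congr rfl fun j _ => hterm j]
        exact hc
      have hcp0 : cp = 0 := by
        by_contra hne
        have h2 := natDegree_le_of_dvd (hβm _ hcpβ) hne
        have h3 : cp.natDegree ≤ d - 1 := by
          apply natDegree_sum_le_of_forall_le
          intro j _
          refine (natDegree_C_mul_le _ _).trans ?_
          rw [natDegree_X_pow]
          omega
        omega
      have hcoeff : c i = cp.coeff (i : ℕ) := by
        rw [hcp, finset_sum_coeff, Finset.sum_eq_single i]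
        · simp [coeff_C_mul, coeff_X_pow]
        · intro j _ hji
          have : (i : ℕ) ≠ (j : ℕ) := fun hh => hji (Fin.ext hh.symm)
          simp [coeff_C_mul, coeff_X_pow, this]
        · intro hi
          exact absurd (Finset.mem_univ i) hi
      rw [hcoeff, hcp0, coeff_zero]
    rw [hspan, finrank_span_eq_card hlin, Fintype.card_fin]

end Order

/-- Let `F_{qⁿ}/F_q` be an extension of finite fields of degree `n ≥ 1` and `0 ≤ k ≤ n`.
If `xⁿ - 1` has a monic divisor of degree `n - k` in `F_q[x]`, then the number `N_k` of
`k`-normal elements of `F_{qⁿ}` over `F_q` satisfies `N_k ≥ (q-1)^(n-k)`. -/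
theorem stmt_14 (Fq Fqn : Type*) [Field Fq] [Fintype Fq] [Field Fqn] [Fintype Fqn]
    [Algebra Fq Fqn] (q n : ℕ) (hq : q = Fintype.card Fq)
    (hn : 0 < n) (hdeg : Module.finrank Fq Fqn = n) (k : ℕ) (hk : k ≤ n)
    (hdvd : ∃ h : Polynomial Fq, h.Monic ∧ h ∣ (X ^ n - 1 : Polynomial Fq) ∧
      h.natDegree = n - k) :
    Nat.card {α : Fqn // Module.finrank Fq (conjSpan Fq n α) = n - k} ≥
      (q - 1) ^ (n - k) := by
  classical
  subst hq
  obtain ⟨h, hm, hdvd', hd⟩ := hdvd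
  have hcount := Oset_count (Fqn := Fqn) hn hdeg h.natDegree h rfl hm hdvd'
  have hdim : ∀ β ∈ Oset Fqn h, Module.finrank Fq (conjSpan Fq n β) = n - k := by
    intro β hβ
    rw [finrank_conjSpan hdeg hm (hd ▸ Nat.sub_le n k) hβ, hd]
  have hinj : Nat.card (Oset Fqn h) ≤
      Nat.card {α : Fqn // Module.finrank Fq (conjSpan Fq n α) = n - k} := by
    apply Nat.card_le_card_of_injective
      (fun β : Oset Fqn h =>
        (⟨β.1, hdim β.1 β.2⟩ : {α : Fqn // Module.finrank Fq (conjSpan Fq n α) = n - k}))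
    intro a b hab
    simp only [Subtype.mk.injEq] at hab
    exact Subtype.ext hab
  rw [Nat.card_coe_set_eq] at hinj
  calc (Fintype.card Fq - 1) ^ (n - k) = (Fintype.card Fq - 1) ^ h.natDegree := by rw [hd]
    _ ≤ (Oset Fqn h).ncard := hcount
    _ ≤ _ := hinj
end

section
/- Let q be a prime power and r a prime dividing q−1. Then for every positive integer d and every integer k with 1 ≤ k ≤ r^d − 1, there exists a polynomial f ∈ F_q[x] of degree k that divides x^{r^d} − 1 and satisfies f(1) ≠ 0. -/
open Polynomial Finset

lemma aux_15 {Fq : Type*} [Field Fq] {r : ℕ} (hr : r.Prime) {ζ : Fq}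
    (hζ : IsPrimitiveRoot ζ r) :
    ∀ d k : ℕ, k ≤ r ^ d - 1 →
      ∃ f : Polynomial Fq, f.natDegree = k ∧ f ∣ (X ^ (r ^ d) - 1 : Polynomial Fq) ∧
        f.eval 1 ≠ 0 := by
  intro d
  induction d with
  | zero =>
    intro k hk
    simp only [pow_zero] at hk ⊢
    interval_cases k
    exact ⟨1, by simp, one_dvd _, by simp⟩
  | succ d ih =>
    intro k hk
    have hr0 : 0 < r := hr.pos
    have hrd : (0:ℕ) < r ^ d := pow_pos hr0 d
    have hrd1 : (0:ℕ) < r ^ (d+1) := pow_pos hr0 _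
    set a := k / r ^ d with ha
    set b := k % r ^ d with hb
    have hb1 : b ≤ r ^ d - 1 := Nat.le_sub_one_of_lt (Nat.mod_lt _ hrd)
    have hka : a < r := by
      have : k < r ^ (d+1) := lt_of_le_of_lt hk (Nat.sub_lt hrd1 one_pos)
      have := Nat.div_lt_of_lt_mul (by rwa [pow_succ] at this)
      exact this
    obtain ⟨g, hgdeg, hgdvd, hgeval⟩ := ih b hb1
    -- key factorization
    have hfac : (X ^ (r ^ (d+1)) - 1 : Polynomial Fq)
        = ∏ i ∈ Finset.range r, (X ^ (r ^ d) - C (ζ ^ i)) := by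
      have h1 : (X ^ r - C (1:Fq)) = ∏ i ∈ Finset.range r, (X - C (ζ ^ i)) := by
        simpa using X_pow_sub_C_eq_prod hζ hr0 (one_pow r)
      have h2 := congrArg (fun p : Polynomial Fq => p.comp (X ^ (r ^ d))) h1
      simp only [sub_comp, pow_comp, X_comp, C_comp, Polynomial.prod_comp] at h2
      rw [pow_succ]
      simpa [pow_mul] using h2
    set S : Finset ℕ := Finset.Icc 1 a with hS
    have hScard : S.card = a := by simp [hS]
    have hSsub : S ⊆ (Finset.range r).erase 0 := by
      intro i hi
      simp only [hS, Finset.mem_Icc] at hi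
      exact Finset.mem_erase.2 ⟨Nat.one_le_iff_ne_zero.mp hi.1, Finset.mem_range.2 (lt_of_le_of_lt hi.2 hka)⟩
    refine ⟨g * ∏ i ∈ S, (X ^ (r ^ d) - C (ζ ^ i)), ?_, ?_, ?_⟩
    · have hmon : ∀ i ∈ S, (X ^ (r ^ d) - C (ζ ^ i) : Polynomial Fq) ≠ 0 := fun i _ =>
        (monic_X_pow_sub_C _ hrd.ne').ne_zero
      have hg0 : g ≠ 0 := fun h => hgeval (by simp [h])
      rw [natDegree_mul hg0 (Finset.prod_ne_zero_iff.2 hmon), natDegree_prod _ _ hmon]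
      have : ∀ i ∈ S, (X ^ (r ^ d) - C (ζ ^ i) : Polynomial Fq).natDegree = r ^ d := fun i _ =>
        natDegree_X_pow_sub_C
      rw [Finset.sum_congr rfl this, Finset.sum_const, hScard, hgdeg, smul_eq_mul]
      exact Nat.mod_add_div' k (r ^ d)
    · rw [hfac, ← Finset.mul_prod_erase (Finset.range r) _ (Finset.mem_range.2 hr0)]
      simp only [pow_zero, map_one]
      exact mul_dvd_mul hgdvd (Finset.prod_dvd_prod_of_subset _ _ _ hSsub)
    · rw [eval_mul]
      refine mul_ne_zero hgeval ?_
      rw [eval_prod]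
      refine Finset.prod_ne_zero_iff.2 fun i hi => ?_
      simp only [hS, Finset.mem_Icc] at hi
      have : ζ ^ i ≠ 1 := hζ.pow_ne_one_of_pos_of_lt (Nat.one_le_iff_ne_zero.mp hi.1) (lt_of_le_of_lt hi.2 hka)
      simp only [eval_sub, eval_pow, eval_X, eval_C, one_pow]
      exact fun h => this (sub_eq_zero.mp h).symm

/-- Let `F_q` be a finite field and `r` a prime dividing `q - 1`.  Then for every
positive integer `d` and every `1 ≤ k ≤ r^d - 1`, there exists a polynomial
`f ∈ F_q[x]` of degree `k` that divides `x^(r^d) - 1` and satisfies `f(1) ≠ 0`. -/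
theorem stmt_15 (Fq : Type*) [Field Fq] [Fintype Fq] (r : ℕ) (hr : r.Prime)
    (hrq : r ∣ Fintype.card Fq - 1) (d k : ℕ) (hd : 0 < d)
    (hk1 : 1 ≤ k) (hk2 : k ≤ r ^ d - 1) :
    ∃ f : Polynomial Fq, f.natDegree = k ∧ f ∣ (X ^ (r ^ d) - 1 : Polynomial Fq) ∧
      f.eval 1 ≠ 0 := by
  classical
  haveI : Fact r.Prime := ⟨hr⟩
  obtain ⟨x, hx⟩ := exists_prime_orderOf_dvd_card (G := Fqˣ) r
    (by rwa [Fintype.card_units])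
  have hζ : IsPrimitiveRoot ((x : Fq)) r := by
    have := IsPrimitiveRoot.orderOf (x : Fq)
    rwa [orderOf_units, hx] at this
  exact aux_15 hr hζ d k hk2
end

section
/- Let q be a power of the prime p and let n ≥ 2 be an integer such that every prime divisor of n divides p(q−1). Then n is F_q-practical, i.e., for every integer k with 1 ≤ k ≤ n−1 there exists a polynomial of degree k in F_q[x] dividing x^n − 1. -/
open Polynomial

private lemma aux16 (Fq : Type*) [Field Fq] [Fintype Fq] (p : ℕ) (hp : p.Prime)
    [CharP Fq p] (q : ℕ) (hq : q = Fintype.card Fq) :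
    ∀ n : ℕ, 2 ≤ n → (∀ ℓ : ℕ, ℓ.Prime → ℓ ∣ n → ℓ ∣ p * (q - 1)) →
    ∀ k : ℕ, k ≤ n - 1 →
      ∃ f : Polynomial Fq, f.natDegree = k ∧ f ∣ (X ^ n - 1 : Polynomial Fq) := by
  intro n
  induction n using Nat.strong_induction_on with
  | _ n IH =>
  intro hn hdiv k hk
  classical
  obtain ⟨ℓ, hℓ, hℓn⟩ := Nat.exists_prime_and_dvd (show n ≠ 1 by omega)
  obtain ⟨m, hm⟩ := hℓn
  have hℓ2 := hℓ.two_le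
  have hm1 : 1 ≤ m := by
    rcases Nat.eq_zero_or_pos m with h | h
    · subst h; simp at hm; omega
    · omega
  have hr : k % m < m := Nat.mod_lt _ hm1
  set j := k / m with hj
  set r := k % m with hrdef
  have hk' : m * j + r = k := Nat.div_add_mod k m
  have hjℓ : j + 1 ≤ ℓ := by
    by_contra h
    have h1 : m * ℓ ≤ m * j := Nat.mul_le_mul_left m (by omega)
    have h2 : n = m * ℓ := by rw [hm, mul_comm]
    omega
  have hXm0 : (X ^ m - 1 : Polynomial Fq) ≠ 0 := by
    have := (monic_X_pow_sub_C (1 : Fq) (by omega : m ≠ 0)).ne_zero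
    rwa [map_one] at this
  have hXmdeg : (X ^ m - 1 : Polynomial Fq).natDegree = m := by
    rw [show (1 : Polynomial Fq) = C 1 by rw [map_one], natDegree_X_pow_sub_C]
  obtain ⟨g, hgdeg, hgdvd⟩ : ∃ g : Polynomial Fq, g.natDegree = r ∧ g ∣ (X ^ m - 1) := by
    rcases Nat.eq_zero_or_pos r with h0 | h1
    · exact ⟨1, by simp [h0], one_dvd _⟩
    · have hm2 : 2 ≤ m := by omega
      have hmn : m < n := by
        have := Nat.mul_le_mul_right m hℓ2
        omega
      exact IH m hmn hm2 (fun t ht htm => hdiv t ht (htm.trans ⟨ℓ, by rw [hm, mul_comm]⟩))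
        r (by omega)
  have hg0 : g ≠ 0 := ne_zero_of_dvd_ne_zero hXm0 hgdvd
  rcases (Nat.Prime.dvd_mul hℓ).mp (hdiv ℓ hℓ ⟨m, hm⟩) with hcase | hcase
  · -- ℓ = p
    have hℓp : ℓ = p := (Nat.prime_dvd_prime_iff_eq hℓ hp).mp hcase
    refine ⟨g * (X ^ m - 1) ^ j, ?_, ?_⟩
    · rw [natDegree_mul hg0 (pow_ne_zero _ hXm0), natDegree_pow, hXmdeg, hgdeg]
      have : j * m = m * j := Nat.mul_comm j m
      omega
    · have h1 : g * (X ^ m - 1) ^ j ∣ (X ^ m - 1) ^ (j + 1) := by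
        rw [pow_succ']
        exact mul_dvd_mul hgdvd dvd_rfl
      have h2 : ((X ^ m - 1 : Polynomial Fq)) ^ ℓ = X ^ n - 1 := by
        subst hℓp
        haveI := Fact.mk hp
        rw [sub_pow_char, one_pow, ← pow_mul, hm, mul_comm]
      exact h1.trans (h2 ▸ pow_dvd_pow _ hjℓ)
  · -- ℓ ∣ q - 1
    have hq2 : 2 ≤ q := hq ▸ Fintype.one_lt_card
    obtain ⟨g0, hg0ord⟩ := IsCyclic.exists_ofOrder_eq_natCard (α := Fqˣ)
    have hcard : Nat.card Fqˣ = q - 1 := by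
      rw [Nat.card_eq_fintype_card, Fintype.card_units, hq]
    have hprim : IsPrimitiveRoot ((g0 : Fq)) (q - 1) := by
      rw [IsPrimitiveRoot.coe_units_iff]
      have := IsPrimitiveRoot.orderOf g0
      rwa [hg0ord, hcard] at this
    obtain ⟨a, ha⟩ := hcase
    have hζ : IsPrimitiveRoot ((g0 : Fq) ^ a) ℓ :=
      hprim.pow (by omega) (by rw [ha, mul_comm])
    have hℓpos : 0 < ℓ := by omega
    have hfact : (X ^ ℓ - 1 : Polynomial Fq) = ∏ c ∈ nthRootsFinset ℓ (1 : Fq), (X - C c) :=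
      X_pow_sub_one_eq_prod hℓpos hζ
    have hprod : (X ^ n - 1 : Polynomial Fq) = ∏ c ∈ nthRootsFinset ℓ (1 : Fq), (X ^ m - C c) := by
      have := congrArg (fun f : Polynomial Fq => f.comp (X ^ m)) hfact
      simpa [sub_comp, pow_comp, X_comp, one_comp, Polynomial.prod_comp, C_comp, ← pow_mul, hm, mul_comm]
        using this
    have hcardℓ : (nthRootsFinset ℓ (1 : Fq)).card = ℓ := hζ.card_nthRootsFinset
    have h1mem : (1 : Fq) ∈ nthRootsFinset ℓ (1 : Fq) := one_mem_nthRootsFinset hℓpos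
    obtain ⟨T, hTsub, hTcard⟩ :=
      Finset.exists_subset_card_eq (s := (nthRootsFinset ℓ (1 : Fq)).erase 1) (n := j)
        (by rw [Finset.card_erase_of_mem h1mem, hcardℓ]; omega)
    have hT1 : (1 : Fq) ∉ T := fun h => Finset.notMem_erase _ _ (hTsub h)
    have hfac0 : ∀ c ∈ T, (X ^ m - C c : Polynomial Fq) ≠ 0 := fun c _ =>
      (monic_X_pow_sub_C c (by omega : m ≠ 0)).ne_zero
    refine ⟨g * ∏ c ∈ T, (X ^ m - C c), ?_, ?_⟩
    · rw [natDegree_mul hg0 (by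
        exact Finset.prod_ne_zero_iff.mpr hfac0), natDegree_prod _ _ hfac0, hgdeg]
      have : ∀ c ∈ T, (X ^ m - C c : Polynomial Fq).natDegree = m := fun c _ =>
        natDegree_X_pow_sub_C
      rw [Finset.sum_congr rfl this, Finset.sum_const, hTcard, smul_eq_mul]
      have : j * m = m * j := Nat.mul_comm j m
      omega
    · have hstep : g * ∏ c ∈ T, (X ^ m - C c) ∣ ∏ c ∈ insert (1 : Fq) T, (X ^ m - C c) := by
        rw [Finset.prod_insert hT1]
        exact mul_dvd_mul (by rwa [map_one]) dvd_rfl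
      have hsub : insert (1 : Fq) T ⊆ nthRootsFinset ℓ (1 : Fq) := by
        intro c hc
        rcases Finset.mem_insert.mp hc with h | h
        · exact h ▸ h1mem
        · exact Finset.erase_subset _ _ (hTsub h)
      rw [hprod]
      exact hstep.trans (Finset.prod_dvd_prod_of_subset _ _ _ hsub)


/-- Let `F_q` be a finite field of characteristic `p` and let `n ≥ 2` be an integer such
that every prime divisor of `n` divides `p(q-1)`.  Then `n` is `F_q`-practical: for every
`1 ≤ k ≤ n-1` there exists a polynomial of degree `k` in `F_q[x]` dividing `xⁿ - 1`. -/
theorem stmt_16 (Fq : Type*) [Field Fq] [Fintype Fq] (p : ℕ) (hp : p.Prime)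
    [CharP Fq p] (q : ℕ) (hq : q = Fintype.card Fq) (n : ℕ) (hn : 2 ≤ n)
    (hdiv : ∀ ℓ : ℕ, ℓ.Prime → ℓ ∣ n → ℓ ∣ p * (q - 1)) :
    ∀ k : ℕ, 1 ≤ k → k ≤ n - 1 →
      ∃ f : Polynomial Fq, f.natDegree = k ∧ f ∣ (X ^ n - 1 : Polynomial Fq) := by
  intro k _ hk2
  exact aux16 Fq p hp q hq n hn hdiv k hk2
end

section
/- Let q be a power of the prime p, let t ≥ 0 be an integer and set n = p^t. Then the number of k-normal elements of F_{q^n} over F_q equals 1 if k = n, and equals (q−1)·q^{n−k−1} for every integer k with 0 ≤ k ≤ n−1. -/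
open Polynomial

open Module

section AuxLin

variable {K V : Type*} [Field K] [AddCommGroup V] [Module K V]

lemma aux_ker_pow_mono (L : Module.End K V) {i j : ℕ} (h : i ≤ j) :
    LinearMap.ker (L ^ i) ≤ LinearMap.ker (L ^ j) := by
  intro x hx
  obtain ⟨d, rfl⟩ := Nat.exists_eq_add_of_le h
  rw [LinearMap.mem_ker] at hx ⊢
  rw [add_comm, pow_add, Module.End.mul_apply, hx, map_zero]

lemma aux_finrank_ker_pow_succ [FiniteDimensional K V] (L : Module.End K V) (j : ℕ) :
    finrank K (LinearMap.ker (L ^ (j + 1))) ≤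
      finrank K (LinearMap.ker (L ^ j)) + finrank K (LinearMap.ker L) := by
  set f : LinearMap.ker (L ^ (j + 1)) →ₗ[K] V :=
    (L ^ j) ∘ₗ (LinearMap.ker (L ^ (j + 1))).subtype with hf
  have hrange : LinearMap.range f ≤ LinearMap.ker L := by
    rintro - ⟨⟨x, hx⟩, rfl⟩
    have hx' : (L ^ (j + 1)) x = 0 := hx
    rw [LinearMap.mem_ker]
    show L ((L ^ j) x) = 0
    rw [← Module.End.mul_apply, ← pow_succ', hx']
  have hker : LinearMap.ker f
      = Submodule.comap (LinearMap.ker (L ^ (j + 1))).subtype (LinearMap.ker (L ^ j)) := by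
    ext x
    simp [hf]
  have h1 : finrank K (LinearMap.range f) ≤ finrank K (LinearMap.ker L) :=
    Submodule.finrank_mono hrange
  have h2 : finrank K (LinearMap.ker f) = finrank K (LinearMap.ker (L ^ j)) := by
    rw [hker]
    exact (Submodule.comapSubtypeEquivOfLe (aux_ker_pow_mono L (Nat.le_succ j))).finrank_eq
  have h3 := LinearMap.finrank_range_add_finrank_ker f
  omega

lemma aux_li (L : Module.End K V) (α : V) (m : ℕ) (h0 : (L ^ m) α ≠ 0)
    (h1 : (L ^ (m + 1)) α = 0) :
    LinearIndependent K (fun i : Fin (m + 1) => (L ^ (i : ℕ)) α) := by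
  rw [Fintype.linearIndependent_iff]
  intro g hg
  suffices h : ∀ r : ℕ, ∀ i : Fin (m + 1), (i : ℕ) = r → g i = 0 by
    intro i; exact h i i rfl
  intro r
  induction r using Nat.strong_induction_on with
  | _ r ih =>
    rintro i rfl
    have him : (i : ℕ) ≤ m := Nat.lt_succ_iff.mp i.2
    have happ := congrArg (fun v => (L ^ (m - (i : ℕ))) v) hg
    simp only [map_sum, map_smul, map_zero, ← Module.End.mul_apply, ← pow_add] at happ
    have hsum : ∑ j : Fin (m + 1), g j • (L ^ (m - (i : ℕ) + (j : ℕ))) α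
        = g i • (L ^ m) α := by
      rw [Finset.sum_eq_single i]
      · rw [Nat.sub_add_cancel him]
      · intro j _ hne
        rcases lt_trichotomy (j : ℕ) (i : ℕ) with hlt | heq | hgt
        · rw [ih j hlt j rfl, zero_smul]
        · exact absurd (Fin.ext heq) hne
        · have : m + 1 ≤ m - (i : ℕ) + (j : ℕ) := by omega
          obtain ⟨d, hd⟩ := Nat.exists_eq_add_of_le this
          rw [hd, add_comm, pow_add, Module.End.mul_apply, h1, map_zero, smul_zero]
      · intro h; exact absurd (Finset.mem_univ i) h
    rw [hsum] at happ
    rcases smul_eq_zero.mp happ with h | h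
    · exact h
    · exact absurd h h0

lemma aux_span_rank (L : Module.End K V) (α : V) (m : ℕ) (h0 : (L ^ m) α ≠ 0)
    (h1 : (L ^ (m + 1)) α = 0) (N : ℕ) (hmN : m < N) :
    finrank K (Submodule.span K ((fun i : ℕ => (L ^ i) α) '' Set.Iio N)) = m + 1 := by
  have hspan : Submodule.span K ((fun i : ℕ => (L ^ i) α) '' Set.Iio N)
      = Submodule.span K (Set.range (fun i : Fin (m + 1) => (L ^ (i : ℕ)) α)) := by
    apply le_antisymm
    · rw [Submodule.span_le]
      rintro - ⟨i, hi, rfl⟩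
      by_cases hle : i ≤ m
      · exact Submodule.subset_span ⟨⟨i, Nat.lt_succ_of_le hle⟩, rfl⟩
      · have hz : (L ^ i) α = 0 := by
          obtain ⟨d, hd⟩ := Nat.exists_eq_add_of_le (show m + 1 ≤ i by omega)
          rw [hd, add_comm, pow_add, Module.End.mul_apply, h1, map_zero]
        simp only [hz]
        exact Submodule.zero_mem _
    · rw [Submodule.span_le]
      rintro - ⟨i, rfl⟩
      exact Submodule.subset_span
        ⟨(i : ℕ), Set.mem_Iio.mpr (lt_of_le_of_lt (Nat.lt_succ_iff.mp i.2) hmN), rfl⟩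
  rw [hspan, finrank_span_eq_card (aux_li L α m h0 h1), Fintype.card_fin]

end AuxLin

open Module in
/-- Let `F_q` be a finite field of characteristic `p`, let `t ≥ 0` and `n = p^t`, and let
`F_{qⁿ}/F_q` be an extension of degree `n`.  Then the number of `k`-normal elements of
`F_{qⁿ}` over `F_q` equals `1` if `k = n`, and equals `(q-1)·q^(n-k-1)` for every
`0 ≤ k ≤ n - 1`. -/
theorem stmt_18 (Fq Fqn : Type*) [Field Fq] [Fintype Fq] [Field Fqn] [Fintype Fqn]
    [Algebra Fq Fqn] (p : ℕ) (hp : p.Prime) [CharP Fq p]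
    (q : ℕ) (hq : q = Fintype.card Fq) (t : ℕ) (n : ℕ) (hn : n = p ^ t)
    (hdeg : Module.finrank Fq Fqn = n) :
    (Nat.card {α : Fqn // Module.finrank Fq (conjSpan Fq n α) = n - n} = 1) ∧
      ∀ k : ℕ, k ≤ n - 1 →
        Nat.card {α : Fqn // Module.finrank Fq (conjSpan Fq n α) = n - k} =
          (q - 1) * q ^ (n - k - 1) := by
  classical
  subst hq
  haveI := Fact.mk hp
  haveI : CharP Fqn p := charP_of_injective_algebraMap (algebraMap Fq Fqn).injective p
  obtain ⟨s, hps, hcard⟩ := FiniteField.card Fq p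
  have hq2 : 2 ≤ Fintype.card Fq := Fintype.one_lt_card
  have hn1 : 1 ≤ n := hn ▸ Nat.one_le_pow t p hp.pos
  -- the Frobenius as an `Fq`-linear endomorphism
  let σ : Module.End Fq Fqn :=
    { toFun := fun x => x ^ Fintype.card Fq
      map_add' := by
        intro x y
        simp only [hcard]
        exact add_pow_char_pow x y p s
      map_smul' := by
        intro c x
        simp only [RingHom.id_apply]
        rw [Algebra.smul_def, Algebra.smul_def, mul_pow, ← map_pow, FiniteField.pow_card] }
  have hσ : ∀ x : Fqn, σ x = x ^ Fintype.card Fq := fun x => rfl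
  have hσpow : ∀ (i : ℕ) (x : Fqn), (σ ^ i) x = x ^ (Fintype.card Fq) ^ i := by
    intro i
    induction i with
    | zero => intro x; simp
    | succ i ih =>
      intro x
      calc (σ ^ (i + 1)) x = (σ ^ i) (σ x) := by rw [pow_succ, Module.End.mul_apply]
        _ = (x ^ Fintype.card Fq) ^ Fintype.card Fq ^ i := ih _
        _ = x ^ Fintype.card Fq ^ (i + 1) := by rw [← pow_mul, pow_succ']
  have hcardn : Fintype.card Fqn = (Fintype.card Fq) ^ n := by
    rw [card_eq_pow_finrank (K := Fq) (V := Fqn), hdeg]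
  have hσn : σ ^ n = 1 := by
    apply LinearMap.ext
    intro x
    rw [hσpow, ← hcardn, Module.End.one_apply, FiniteField.pow_card]
  haveI : Nontrivial (Module.End Fq Fqn) :=
    ⟨1, 0, fun h => by
      have h2 := LinearMap.congr_fun h (1 : Fqn)
      simp at h2⟩
  haveI : CharP (Module.End Fq Fqn) p :=
    charP_of_injective_ringHom (algebraMap Fq (Module.End Fq Fqn)).injective p
  set L : Module.End Fq Fqn := σ - 1 with hLdef
  have hLn : L ^ n = 0 := by
    have h := sub_pow_char_pow_of_commute p t (Commute.one_right σ)
    rw [hLdef, hn, h, one_pow, ← hn, hσn, sub_self]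
  have hL : ∀ x : Fqn, L x = σ x - x := by
    intro x
    rw [hLdef, LinearMap.sub_apply, Module.End.one_apply]
  have hLz : ∀ α : Fqn, (L ^ n) α = 0 := fun α => by rw [hLn]; rfl
  have hσL : σ = L + 1 := by rw [hLdef, sub_add_cancel]
  have hconj : ∀ α : Fqn,
      conjSpan Fq n α = Submodule.span Fq ((fun i : ℕ => (L ^ i) α) '' Set.Iio n) := by
    intro α
    set W := Submodule.span Fq ((fun i : ℕ => (L ^ i) α) '' Set.Iio n) with hWdef
    have hαW : α ∈ W := Submodule.subset_span ⟨0, Set.mem_Iio.mpr hn1, by simp⟩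
    have hWσ : ∀ x ∈ W, σ x ∈ W := by
      intro x hx
      have hmap : Submodule.map σ W ≤ W := by
        rw [hWdef, Submodule.map_span, Submodule.span_le]
        rintro - ⟨-, ⟨i, hi, rfl⟩, rfl⟩
        have heq : σ ((L ^ i) α) = (L ^ i) α + (L ^ (i + 1)) α := by
          rw [hσL, LinearMap.add_apply, Module.End.one_apply, ← Module.End.mul_apply,
            ← pow_succ', add_comm]
        rw [heq]
        refine Submodule.add_mem _ (Submodule.subset_span ⟨i, hi, rfl⟩) ?_
        by_cases h : i + 1 < n
        · exact Submodule.subset_span ⟨i + 1, h, rfl⟩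
        · have hin : i + 1 = n := by
            have := Set.mem_Iio.mp hi
            omega
          rw [hin, hLz]
          exact Submodule.zero_mem _
      exact hmap ⟨x, hx, rfl⟩
    have hσiW : ∀ i : ℕ, (σ ^ i) α ∈ W := by
      intro i
      induction i with
      | zero => simpa using hαW
      | succ i ih =>
        have : (σ ^ (i + 1)) α = σ ((σ ^ i) α) := by
          rw [pow_succ', Module.End.mul_apply]
        rw [this]
        exact hWσ _ ih
    have hαC : α ∈ conjSpan Fq n α := by
      refine Submodule.subset_span ⟨0, Set.mem_Iio.mpr hn1, ?_⟩
      simp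
    have hCσ : ∀ x ∈ conjSpan Fq n α, σ x ∈ conjSpan Fq n α := by
      intro x hx
      have hmap : Submodule.map σ (conjSpan Fq n α) ≤ conjSpan Fq n α := by
        rw [conjSpan, Submodule.map_span, Submodule.span_le]
        rintro - ⟨-, ⟨i, hi, rfl⟩, rfl⟩
        have heq : σ ((fun i : ℕ => α ^ (Fintype.card Fq) ^ i) i) = (σ ^ (i + 1)) α := by
          simp only []
          rw [← hσpow i α, ← Module.End.mul_apply, ← pow_succ']
        rw [heq]
        by_cases h : i + 1 < n
        · exact Submodule.subset_span ⟨i + 1, h, (hσpow (i + 1) α).symm⟩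
        · have hin : i + 1 = n := by
            have := Set.mem_Iio.mp hi
            omega
          rw [hin, hσn]
          simpa [conjSpan] using hαC
      exact hmap ⟨x, hx, rfl⟩
    have hCL : ∀ x ∈ conjSpan Fq n α, L x ∈ conjSpan Fq n α := by
      intro x hx
      rw [hL]
      exact Submodule.sub_mem _ (hCσ x hx) hx
    have hLiC : ∀ i : ℕ, (L ^ i) α ∈ conjSpan Fq n α := by
      intro i
      induction i with
      | zero => simpa using hαC
      | succ i ih =>
        have : (L ^ (i + 1)) α = L ((L ^ i) α) := by
          rw [pow_succ', Module.End.mul_apply]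
        rw [this]
        exact hCL _ ih
    apply le_antisymm
    · rw [conjSpan, Submodule.span_le]
      rintro - ⟨i, hi, rfl⟩
      show α ^ (Fintype.card Fq) ^ i ∈ W
      exact (hσpow i α) ▸ hσiW i
    · rw [hWdef, Submodule.span_le]
      rintro - ⟨i, hi, rfl⟩
      exact hLiC i
  -- minimal vanishing exponent
  have hex : ∀ α : Fqn, ∃ j, (L ^ j) α = 0 := fun α => ⟨n, hLz α⟩
  set ν : Fqn → ℕ := fun α => Nat.find (hex α) with hνdef
  have hν0 : ∀ α, (L ^ ν α) α = 0 := fun α => Nat.find_spec (hex α)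
  have hνmin : ∀ (α) (j), j < ν α → (L ^ j) α ≠ 0 := fun α j h => Nat.find_min (hex α) h
  have hνle : ∀ α, ν α ≤ n := fun α => Nat.find_le (hLz α)
  have hrank : ∀ α : Fqn, Module.finrank Fq (conjSpan Fq n α) = ν α := by
    intro α
    rw [hconj α]
    cases hνα : ν α with
    | zero =>
      have hα : α = 0 := by
        have h := hν0 α
        rw [hνα, pow_zero] at h
        simpa using h
      subst hα
      have hz : Submodule.span Fq ((fun i : ℕ => (L ^ i) (0 : Fqn)) '' Set.Iio n) = ⊥ := by
        rw [Submodule.span_eq_bot]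
        rintro - ⟨i, -, rfl⟩
        simp
      rw [hz, finrank_bot]
    | succ m =>
      have h0 : (L ^ m) α ≠ 0 := hνmin α m (by omega)
      have h1 : (L ^ (m + 1)) α = 0 := by rw [← hνα]; exact hν0 α
      have hmn : m < n := by
        have := hνle α
        omega
      exact aux_span_rank L α m h0 h1 n hmn
  -- cardinality of submodules
  have hcardsub : ∀ W : Submodule Fq Fqn,
      Nat.card W = (Fintype.card Fq) ^ Module.finrank Fq W := by
    intro W
    haveI : Fintype W := Fintype.ofFinite W
    rw [Nat.card_eq_fintype_card, card_eq_pow_finrank (K := Fq)]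
  -- the kernel of L is at most one-dimensional
  have hker1 : Module.finrank Fq (LinearMap.ker L) ≤ 1 := by
    have hPne : (X ^ Fintype.card Fq - X : Polynomial Fqn) ≠ 0 := by
      intro h
      have h2 := congrArg (fun P : Polynomial Fqn => P.coeff (Fintype.card Fq)) h
      simp only [coeff_sub, coeff_X_pow, if_pos rfl, coeff_zero, coeff_X] at h2
      rw [if_neg (show ¬(1 = Fintype.card Fq) by omega)] at h2
      simp at h2
    have hsub : (LinearMap.ker L : Set Fqn)
        ⊆ ↑((X ^ Fintype.card Fq - X : Polynomial Fqn).roots.toFinset) := by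
      intro x hx
      have hx' : x ^ Fintype.card Fq - x = 0 := by
        have h := LinearMap.mem_ker.mp hx
        rw [hL, hσ] at h
        exact h
      rw [Finset.mem_coe, Multiset.mem_toFinset, mem_roots hPne]
      simp [IsRoot, hx']
    have hdegle : (X ^ Fintype.card Fq - X : Polynomial Fqn).natDegree ≤ Fintype.card Fq := by
      refine le_trans (natDegree_sub_le _ _) ?_
      simp only [natDegree_X_pow, natDegree_X]
      omega
    have hcardle : Nat.card (LinearMap.ker L) ≤ Fintype.card Fq := by
      calc Nat.card (LinearMap.ker L) = (LinearMap.ker L : Set Fqn).ncard :=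
            Nat.card_coe_set_eq _
        _ ≤ (↑((X ^ Fintype.card Fq - X : Polynomial Fqn).roots.toFinset) : Set Fqn).ncard :=
            Set.ncard_le_ncard hsub (Set.toFinite _)
        _ = ((X ^ Fintype.card Fq - X : Polynomial Fqn).roots.toFinset).card :=
            Set.ncard_coe_finset _
        _ ≤ Multiset.card (X ^ Fintype.card Fq - X : Polynomial Fqn).roots :=
            Multiset.toFinset_card_le _
        _ ≤ (X ^ Fintype.card Fq - X : Polynomial Fqn).natDegree := card_roots' _
        _ ≤ Fintype.card Fq := hdegle
    rw [hcardsub (LinearMap.ker L)] at hcardle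
    have h1 : Fintype.card Fq ^ Module.finrank Fq (LinearMap.ker L)
        ≤ Fintype.card Fq ^ 1 := by rwa [pow_one]
    exact (Nat.pow_le_pow_iff_right (by omega : 1 < Fintype.card Fq)).mp h1
  -- dimensions of kernels of powers
  have hstep : ∀ j : ℕ, Module.finrank Fq (LinearMap.ker (L ^ (j + 1)))
      ≤ Module.finrank Fq (LinearMap.ker (L ^ j)) + 1 := by
    intro j
    have := aux_finrank_ker_pow_succ L j
    omega
  have hub : ∀ j : ℕ, Module.finrank Fq (LinearMap.ker (L ^ j)) ≤ j := by
    intro j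
    induction j with
    | zero =>
      rw [pow_zero, Module.End.one_eq_id, LinearMap.ker_id, finrank_bot]
    | succ j ih =>
      have := hstep j
      omega
  have hchain : ∀ j d : ℕ, Module.finrank Fq (LinearMap.ker (L ^ (j + d)))
      ≤ Module.finrank Fq (LinearMap.ker (L ^ j)) + d := by
    intro j d
    induction d with
    | zero => simp
    | succ d ih =>
      have := hstep (j + d)
      have h2 : j + (d + 1) = (j + d) + 1 := by omega
      rw [h2]
      omega
  have htop : Module.finrank Fq (LinearMap.ker (L ^ n)) = n := by
    rw [hLn, LinearMap.ker_zero, finrank_top, hdeg]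
  have hd : ∀ j : ℕ, j ≤ n → Module.finrank Fq (LinearMap.ker (L ^ j)) = j := by
    intro j hj
    have h1 := hchain j (n - j)
    rw [(by omega : j + (n - j) = n), htop] at h1
    have h2 := hub j
    omega
  -- counting elements of given rank
  have hsetcard : ∀ m : ℕ, 1 ≤ m → m ≤ n →
      Nat.card {α : Fqn // Module.finrank Fq (conjSpan Fq n α) = m}
        = Fintype.card Fq ^ m - Fintype.card Fq ^ (m - 1) := by
    intro m hm1 hmn
    have hmono : ∀ (α : Fqn) (a b : ℕ), a ≤ b → (L ^ a) α = 0 → (L ^ b) α = 0 := by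
      intro α a b hab ha
      obtain ⟨d, rfl⟩ := Nat.exists_eq_add_of_le hab
      rw [add_comm, pow_add, Module.End.mul_apply, ha, map_zero]
    have hseteq : {α : Fqn | Module.finrank Fq (conjSpan Fq n α) = m}
        = (LinearMap.ker (L ^ m) : Set Fqn) \ (LinearMap.ker (L ^ (m - 1)) : Set Fqn) := by
      ext α
      simp only [Set.mem_setOf_eq, Set.mem_diff, SetLike.mem_coe, LinearMap.mem_ker]
      rw [hrank α]
      constructor
      · rintro rfl
        exact ⟨hν0 α, hνmin α (ν α - 1) (by omega)⟩
      · rintro ⟨hz, hnz⟩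
        have hle : ν α ≤ m := Nat.find_le hz
        by_contra hne
        exact hnz (hmono α (ν α) (m - 1) (by omega) (hν0 α))
    have hsub2 : (LinearMap.ker (L ^ (m - 1)) : Set Fqn) ⊆ (LinearMap.ker (L ^ m) : Set Fqn) :=
      aux_ker_pow_mono L (by omega)
    calc Nat.card {α : Fqn // Module.finrank Fq (conjSpan Fq n α) = m}
        = Set.ncard {α : Fqn | Module.finrank Fq (conjSpan Fq n α) = m} :=
          Nat.card_coe_set_eq _
      _ = Set.ncard ((LinearMap.ker (L ^ m) : Set Fqn) \ (LinearMap.ker (L ^ (m - 1)) : Set Fqn)) := by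
          rw [hseteq]
      _ = (LinearMap.ker (L ^ m) : Set Fqn).ncard - (LinearMap.ker (L ^ (m - 1)) : Set Fqn).ncard :=
          Set.ncard_diff hsub2 (Set.toFinite _)
      _ = Fintype.card Fq ^ m - Fintype.card Fq ^ (m - 1) := by
          rw [← Nat.card_coe_set_eq, ← Nat.card_coe_set_eq]
          show Nat.card (LinearMap.ker (L ^ m)) - Nat.card (LinearMap.ker (L ^ (m - 1))) = _
          rw [hcardsub, hcardsub, hd m hmn, hd (m - 1) (by omega)]
  constructor
  · -- the case k = n
    have h0 : ∀ α : Fqn, Module.finrank Fq (conjSpan Fq n α) = 0 ↔ α = 0 := by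
      intro α
      rw [hrank]
      constructor
      · intro h
        have h2 := hν0 α
        rw [h, pow_zero] at h2
        simpa using h2
      · rintro rfl
        have : ν (0 : Fqn) ≤ 0 := Nat.find_le (by simp)
        omega
    rw [Nat.sub_self, Nat.card_eq_one_iff_unique]
    constructor
    · constructor
      rintro ⟨a, ha⟩ ⟨b, hb⟩
      exact Subtype.ext (((h0 a).mp ha).trans ((h0 b).mp hb).symm)
    · exact ⟨⟨0, (h0 0).mpr rfl⟩⟩
  · intro k hk
    have hkn : k < n := by omega
    rw [hsetcard (n - k) (by omega) (by omega)]
    set e := n - k - 1 with he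
    have h2 : n - k = e + 1 := by omega
    rw [h2, Nat.sub_mul, one_mul, pow_succ, mul_comm (Fintype.card Fq ^ e)]
end

section
/- Let q be a prime power and n a positive integer dividing q−1. Then for every integer k with 0 ≤ k ≤ n, the number of k-normal elements of F_{q^n} over F_q equals C(n,k) · (q−1)^{n−k}, where C(n,k) denotes the binomial coefficient. -/
open Polynomial Finset Module

noncomputable def fiberEquiv {n : ℕ} (F : Type*) [Field F] [DecidableEq F] (S : Finset (Fin n)) :
    {c : Fin n → F // (univ.filter fun i => c i ≠ 0) = S} ≃ (S → {x : F // x ≠ 0}) where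
  toFun c i := ⟨c.1 i, (mem_filter.mp
    (show (i : Fin n) ∈ univ.filter fun j => c.1 j ≠ 0 by rw [c.2]; exact i.2)).2⟩
  invFun f := ⟨fun i => if h : i ∈ S then (f ⟨i, h⟩).1 else 0, by
    ext i
    simp only [mem_filter, mem_univ, true_and]
    constructor
    · intro h
      by_contra hn
      rw [dif_neg hn] at h
      exact h rfl
    · intro h
      rw [dif_pos h]
      exact (f ⟨i, h⟩).2⟩
  left_inv c := by
    apply Subtype.ext; funext i
    by_cases h : i ∈ S
    · simp [h]
    · have : c.1 i = 0 := by
        by_contra hn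
        exact h (c.2 ▸ mem_filter.mpr ⟨mem_univ i, hn⟩)
      simp [h, this]
  right_inv f := by
    funext i
    apply Subtype.ext
    simp [i.2]

lemma count_aux (F : Type*) [Field F] [Fintype F] (n m : ℕ) :
    Nat.card {c : Fin n → F // Nat.card {i : Fin n // c i ≠ 0} = m} =
      n.choose m * (Fintype.card F - 1) ^ m := by
  classical
  have hcard : ∀ c : Fin n → F,
      Nat.card {i : Fin n // c i ≠ 0} = (univ.filter fun i => c i ≠ 0).card := by
    intro c
    rw [Nat.card_eq_fintype_card, Fintype.card_subtype]
  have hne : Fintype.card {x : F // x ≠ 0} = Fintype.card F - 1 := by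
    rw [Fintype.card_subtype_compl, Fintype.card_subtype_eq]
  rw [Nat.card_eq_fintype_card, Fintype.card_subtype]
  have key : (univ.filter fun c : Fin n → F => Nat.card {i : Fin n // c i ≠ 0} = m).card
      = ∑ S ∈ powersetCard m (univ : Finset (Fin n)),
        (((univ.filter fun c : Fin n → F => Nat.card {i : Fin n // c i ≠ 0} = m)).filter
          fun c => (univ.filter fun i => c i ≠ 0) = S).card := by
    apply Finset.card_eq_sum_card_fiberwise
    intro c hc
    simp only [mem_coe] at hc ⊢
    rw [mem_powersetCard_univ]
    rw [mem_filter] at hc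
    rw [← hcard c]
    exact hc.2
  rw [key]
  have hfib : ∀ S ∈ powersetCard m (univ : Finset (Fin n)),
      (((univ.filter fun c : Fin n → F => Nat.card {i : Fin n // c i ≠ 0} = m)).filter
          fun c => (univ.filter fun i => c i ≠ 0) = S).card = (Fintype.card F - 1) ^ m := by
    intro S hS
    rw [mem_powersetCard_univ] at hS
    have h1 : (((univ.filter fun c : Fin n → F => Nat.card {i : Fin n // c i ≠ 0} = m)).filter
          fun c => (univ.filter fun i => c i ≠ 0) = S)
        = (univ.filter fun c : Fin n → F => (univ.filter fun i => c i ≠ 0) = S) := by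
      rw [filter_filter]
      apply filter_congr
      intro c _
      simp only [and_iff_right_iff_imp]
      intro h
      rw [hcard c, h, hS]
    rw [h1, ← Fintype.card_subtype, Fintype.card_congr (fiberEquiv F S),
      Fintype.card_fun, hne, Fintype.card_coe, hS]
  rw [Finset.sum_congr rfl hfib, Finset.sum_const, card_powersetCard, card_univ,
    Fintype.card_fin, smul_eq_mul]

/-- Let `F_{qⁿ}/F_q` be an extension of finite fields where `n` divides `q - 1`.  Then,
for every `0 ≤ k ≤ n`, the number of `k`-normal elements of `F_{qⁿ}` over `F_q` equals
`C(n,k)·(q-1)^(n-k)`. -/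
theorem stmt_19 (Fq Fqn : Type*) [Field Fq] [Fintype Fq] [Field Fqn] [Fintype Fqn]
    [Algebra Fq Fqn] (q n : ℕ) (hq : q = Fintype.card Fq) (hn : 0 < n)
    (hndvd : n ∣ q - 1) (hdeg : Module.finrank Fq Fqn = n) :
    ∀ k : ℕ, k ≤ n →
      Nat.card {α : Fqn // Module.finrank Fq (conjSpan Fq n α) = n - k} =
        n.choose k * (q - 1) ^ (n - k) := by
  classical
  intro k hk
  haveI : NeZero n := ⟨hn.ne'⟩
  have hq2 : 1 < q := hq ▸ Fintype.one_lt_card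
  -- characteristic
  set p := ringChar Fq with hpdef
  haveI hCh : CharP Fq p := ringChar.charP Fq
  obtain ⟨m, hp, hcard⟩ := FiniteField.card Fq p
  haveI : Fact p.Prime := ⟨hp⟩
  haveI : CharP Fqn p := charP_of_injective_algebraMap (algebraMap Fq Fqn).injective p
  have hqpm : q = p ^ (m : ℕ) := by rw [hq, hcard]
  -- Frobenius additivity over sums
  have hfrob_add : ∀ (j : ℕ) (s : Finset (Fin n)) (f : Fin n → Fqn),
      (∑ i ∈ s, f i) ^ q ^ j = ∑ i ∈ s, f i ^ q ^ j := by
    intro j s f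
    have hqe : q ^ j = p ^ ((m : ℕ) * j) := by rw [hqpm, pow_mul]
    rw [hqe]
    simpa only [iterateFrobenius_def] using map_sum (iterateFrobenius Fqn p ((m : ℕ) * j)) f s
  -- scalars are fixed by Frobenius powers
  have hscal : ∀ (j : ℕ) (c : Fq), c ^ q ^ j = c := by
    intro j c
    rw [hq]
    exact FiniteField.pow_card_pow j c
  have hsmulpow : ∀ (j : ℕ) (c : Fq) (x : Fqn), (c • x) ^ q ^ j = c • x ^ q ^ j := by
    intro j c x
    rw [Algebra.smul_def, mul_pow, ← map_pow, hscal, ← Algebra.smul_def]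
  -- a primitive n-th root of unity in Fq
  have hcardu : Fintype.card Fqˣ = q - 1 := by rw [Fintype.card_units, ← hq]
  obtain ⟨ζu, hζu⟩ : ∃ ζu : Fqˣ, orderOf ζu = n := by
    have h := IsCyclic.card_orderOf_eq_totient (α := Fqˣ) (d := n) (by rw [hcardu]; exact hndvd)
    have hpos : 0 < Nat.totient n := Nat.totient_pos.mpr hn
    rw [← h] at hpos
    obtain ⟨a, ha⟩ := Finset.card_pos.mp hpos
    exact ⟨a, by simpa using (Finset.mem_filter.mp ha).2⟩
  set ζ : Fq := (ζu : Fq) with hζdef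
  have hζord : orderOf ζ = n := by rw [hζdef, orderOf_units, hζu]
  have hζn : ζ ^ n = 1 := by rw [← hζord]; exact pow_orderOf_eq_one ζ
  -- geometric sums of roots of unity
  have hgeom : ∀ u : Fq, u ^ n = 1 → (∑ j ∈ range n, u ^ j) = if u = 1 then (n : Fq) else 0 := by
    intro u hu
    split_ifs with h
    · simp [h]
    · have h2 := geom_sum_mul u n
      rw [hu, sub_self] at h2
      rcases mul_eq_zero.mp h2 with h3 | h3
      · exact h3
      · exact absurd (sub_eq_zero.mp h3) h
  -- n is invertible in Fq
  have hnne : (n : Fq) ≠ 0 := by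
    intro h
    have hpn : p ∣ n := (CharP.cast_eq_zero_iff Fq p n).mp h
    have hpq : p ∣ q := by
      rw [hqpm]
      exact dvd_pow_self p m.2.ne'
    have hpq1 : p ∣ q - 1 := hpn.trans hndvd
    have h1 : p ∣ q - (q - 1) := Nat.dvd_sub hpq hpq1
    rw [Nat.sub_sub_self hq2.le] at h1
    exact hp.one_lt.ne' (Nat.dvd_one.mp h1)
  -- existence of an eigenvector β with β ^ q = ζ • β
  have hcardFqn : Fintype.card Fqn = q ^ n := by
    rw [hq, card_eq_pow_finrank (K := Fq) (V := Fqn), hdeg]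
  set S : ℕ := ∑ i ∈ range n, q ^ i with hSdef
  have hS : (q - 1) * S = q ^ n - 1 := by
    have h1 := geom_sum_mul (q : ℤ) n
    have h2 : (((q - 1) * S : ℕ) : ℤ) = ((q ^ n - 1 : ℕ) : ℤ) := by
      push_cast [Nat.cast_sub hq2.le, Nat.cast_sub (Nat.one_le_pow n q (by omega))]
      rw [hSdef]
      push_cast
      rw [mul_comm]
      exact_mod_cast h1
    exact_mod_cast h2
  have hnS : n ∣ S := by
    have h1 : (S : ZMod n) = 0 := by
      have hq1 : ((q : ℕ) : ZMod n) = 1 := by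
        have h2 : ((q - 1 : ℕ) : ZMod n) = 0 := (ZMod.natCast_eq_zero_iff _ _).mpr hndvd
        have h3 : q = (q - 1) + 1 := (Nat.sub_add_cancel hq2.le).symm
        rw [h3, Nat.cast_add, h2, Nat.cast_one, zero_add]
      rw [hSdef]
      push_cast
      rw [hq1]
      simp [ZMod.natCast_self]
    exact (ZMod.natCast_eq_zero_iff _ _).mp h1
  have hSpos : 0 < S := by
    rw [hSdef]
    exact Finset.sum_pos (fun i _ => pow_pos (by omega) i) ⟨0, Finset.mem_range.mpr hn⟩
  set zu : Fqnˣ := Units.map (algebraMap Fq Fqn : Fq →* Fqn) ζu with hzudef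
  have hzucoe : (zu : Fqn) = algebraMap Fq Fqn ζ := rfl
  obtain ⟨g, hg⟩ := IsCyclic.exists_generator (α := Fqnˣ)
  have hgord : orderOf g = q ^ n - 1 := by
    rw [orderOf_eq_card_of_forall_mem_zpowers hg, Nat.card_eq_fintype_card, Fintype.card_units, hcardFqn]
  obtain ⟨t, ht⟩ : ∃ t : ℕ, g ^ t = zu := by
    have h1 := hg zu
    rw [← mem_powers_iff_mem_zpowers, Submonoid.mem_powers_iff] at h1
    exact h1
  have hzS : zu ^ S = 1 := by
    have h1 : ζu ^ S = 1 := orderOf_dvd_iff_pow_eq_one.mp (by rw [hζu]; exact hnS)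
    rw [hzudef, ← map_pow, h1, map_one]
  have hdvd2 : (q ^ n - 1) ∣ t * S := by
    rw [← hgord]
    apply orderOf_dvd_of_pow_eq_one
    rw [pow_mul, ht, hzS]
  have hq1t : (q - 1) ∣ t := by
    rw [← hS] at hdvd2
    exact (Nat.mul_dvd_mul_iff_right hSpos).mp hdvd2
  obtain ⟨r, hr⟩ := hq1t
  set β : Fqn := ((g ^ r : Fqnˣ) : Fqn) with hβdef
  have hβ0 : β ≠ 0 := Units.ne_zero _
  set z : Fqn := algebraMap Fq Fqn ζ with hzdef
  have hβq1 : β ^ (q - 1) = z := by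
    have h1 : (g ^ r) ^ (q - 1) = zu := by
      rw [← pow_mul, mul_comm r (q - 1), ← hr, ht]
    calc β ^ (q - 1) = (((g ^ r) ^ (q - 1) : Fqnˣ) : Fqn) := by rw [hβdef]; push_cast; ring
      _ = z := by rw [h1, hzucoe]
  have hβq : β ^ q = z * β := by
    have h1 : q = (q - 1) + 1 := (Nat.sub_add_cancel hq2.le).symm
    rw [h1, pow_succ, hβq1]
  have hzq : ∀ j : ℕ, (z ^ j) ^ q = z ^ j := by
    intro j
    rw [hzdef, ← map_pow, ← map_pow, hq, FiniteField.pow_card]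
  have hzpow : ∀ j : ℕ, β ^ q ^ j = z ^ j * β := by
    intro j
    induction j with
    | zero => simp
    | succ j ih =>
      rw [pow_succ, pow_mul, ih, mul_pow, hzq, hβq, pow_succ]
      ring
  set B : Fin n → Fqn := fun i => β ^ (i : ℕ) with hBdef
  have hB0 : ∀ i, B i ≠ 0 := fun i => pow_ne_zero _ hβ0
  have hBpow : ∀ (i : Fin n) (j : ℕ), B i ^ q ^ j = ζ ^ ((i : ℕ) * j) • B i := by
    intro i j
    have h0 : B i = β ^ (i : ℕ) := rfl
    rw [h0, ← pow_mul, mul_comm (i : ℕ) (q ^ j), pow_mul, hzpow, mul_pow, ← pow_mul,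
      Algebra.smul_def, map_pow, ← hzdef]
    ring
  -- main expansion of Frobenius powers on linear combinations
  have hexp : ∀ (c : Fin n → Fq) (j : ℕ),
      (∑ i, c i • B i) ^ q ^ j = ∑ i, (c i * ζ ^ ((i : ℕ) * j)) • B i := by
    intro c j
    rw [hfrob_add]
    refine Finset.sum_congr rfl fun i _ => ?_
    rw [hsmulpow, hBpow, smul_smul]
  -- root-of-unity condition
  have hcond : ∀ i i₀ : Fin n, (ζ ^ ((n - 1) * (i₀ : ℕ) + (i : ℕ)) = 1) ↔ i = i₀ := by
    intro i i₀
    rw [← orderOf_dvd_iff_pow_eq_one, hζord]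
    constructor
    · intro h
      have h2 : (((n - 1) * (i₀ : ℕ) + (i : ℕ) : ℕ) : ZMod n) = 0 :=
        (ZMod.natCast_eq_zero_iff _ _).mpr h
      push_cast [Nat.cast_sub hn] at h2
      rw [ZMod.natCast_self] at h2
      have h3 : ((i : ℕ) : ZMod n) = ((i₀ : ℕ) : ZMod n) := by linear_combination h2
      have h4 := congrArg ZMod.val h3
      rw [ZMod.val_cast_of_lt i.2, ZMod.val_cast_of_lt i₀.2] at h4
      exact Fin.ext h4
    · rintro rfl
      have h1 : (n - 1) * (i : ℕ) + (i : ℕ) = n * (i : ℕ) := by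
        rw [Nat.sub_one_mul, Nat.sub_add_cancel (Nat.le_mul_of_pos_left _ hn)]
      rw [h1]
      exact dvd_mul_right n _
  set ξ : Fq := ζ ^ (n - 1) with hξdef
  -- extraction of coefficients
  have hext : ∀ (c : Fin n → Fq) (i₀ : Fin n),
      (∑ j ∈ range n, ξ ^ ((i₀ : ℕ) * j) • (∑ i, c i • B i) ^ q ^ j)
        = (c i₀ * n) • B i₀ := by
    intro c i₀
    have step1 : ∀ j : ℕ, ξ ^ ((i₀ : ℕ) * j) • (∑ i, c i • B i) ^ q ^ j
        = ∑ i, (c i * (ζ ^ ((n - 1) * (i₀ : ℕ) + (i : ℕ))) ^ j) • B i := by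
      intro j
      rw [hexp c j, Finset.smul_sum]
      refine Finset.sum_congr rfl fun i _ => ?_
      rw [smul_smul]
      congr 1
      rw [hξdef, ← pow_mul, ← pow_mul]
      rw [show ((n - 1) * (i₀ : ℕ) + (i : ℕ)) * j = (n - 1) * ((i₀ : ℕ) * j) + (i : ℕ) * j
          from by ring, pow_add]
      ring
    rw [Finset.sum_congr rfl fun j _ => step1 j, Finset.sum_comm]
    have step2 : ∀ i : Fin n,
        (∑ j ∈ range n, (c i * (ζ ^ ((n - 1) * (i₀ : ℕ) + (i : ℕ))) ^ j) • B i)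
          = (if i = i₀ then (c i₀ * n) • B i₀ else 0) := by
      intro i
      rw [← Finset.sum_smul, ← Finset.mul_sum,
        hgeom _ (by rw [← pow_mul, mul_comm ((n - 1) * (i₀ : ℕ) + (i : ℕ)) n, pow_mul, hζn,
          one_pow])]
      by_cases h : i = i₀
      · rw [if_pos ((hcond i i₀).mpr h), if_pos h, h]
      · rw [if_neg (fun hc => h ((hcond i i₀).mp hc)), if_neg h, mul_zero, zero_smul]
    rw [Finset.sum_congr rfl fun i _ => step2 i, Finset.sum_ite_eq' univ i₀]
    simp
  -- linear independence of B
  have hind : LinearIndependent Fq B := by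
    rw [Fintype.linearIndependent_iff]
    intro c hc i₀
    have h1 := hext c i₀
    rw [hc] at h1
    have h2 : ∀ j ∈ range n, ξ ^ ((i₀ : ℕ) * j) • (0 : Fqn) ^ q ^ j = 0 := by
      intro j _
      rw [zero_pow (pow_ne_zero j (by omega : q ≠ 0)), smul_zero]
    rw [Finset.sum_congr rfl h2, Finset.sum_const, smul_zero] at h1
    have h3 : c i₀ * (n : Fq) = 0 := by
      rcases smul_eq_zero.mp h1.symm with h | h
      · exact h
      · exact absurd h (hB0 i₀)
    rcases mul_eq_zero.mp h3 with h | h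
    · exact h
    · exact absurd h hnne
  haveI : Nonempty (Fin n) := ⟨⟨0, hn⟩⟩
  have hcardn : Fintype.card (Fin n) = Module.finrank Fq Fqn := by
    rw [Fintype.card_fin, hdeg]
  set b : Basis (Fin n) Fq Fqn := basisOfLinearIndependentOfCardEqFinrank hind hcardn with hbdef
  have hb : ⇑b = B := coe_basisOfLinearIndependentOfCardEqFinrank _ _
  -- identification of conjSpan
  have hspan : ∀ α : Fqn,
      conjSpan Fq n α = Submodule.span Fq (B '' {i | b.equivFun α i ≠ 0}) := by
    intro α
    have hα : (∑ i, b.equivFun α i • B i) = α := by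
      conv_lhs => rw [← hb]
      exact b.sum_equivFun α
    apply le_antisymm
    · rw [conjSpan, Submodule.span_le]
      rintro x ⟨j, _, rfl⟩
      have hx : α ^ (Fintype.card Fq) ^ j = ∑ i, (b.equivFun α i * ζ ^ ((i : ℕ) * j)) • B i := by
        conv_lhs => rw [← hq, ← hα]
        exact hexp _ j
      show α ^ (Fintype.card Fq) ^ j ∈ (Submodule.span Fq (B '' {i | b.equivFun α i ≠ 0}) : Set Fqn)
      rw [hx]
      apply Submodule.sum_mem
      intro i _
      by_cases h : b.equivFun α i = 0
      · rw [h, zero_mul, zero_smul]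
        exact Submodule.zero_mem _
      · exact Submodule.smul_mem _ _ (Submodule.subset_span ⟨i, h, rfl⟩)
    · rw [Submodule.span_le]
      rintro x ⟨i, hi, rfl⟩
      have h1 : (b.equivFun α i * n) • B i ∈ conjSpan Fq n α := by
        rw [← hext (b.equivFun α) i]
        apply Submodule.sum_mem
        intro j hj
        apply Submodule.smul_mem
        rw [hα]
        exact Submodule.subset_span ⟨j, Set.mem_Iio.mpr (Finset.mem_range.mp hj), by rw [← hq]⟩
      have hnc : b.equivFun α i * (n : Fq) ≠ 0 := mul_ne_zero hi hnne
      have h2 : B i = (b.equivFun α i * (n : Fq))⁻¹ • ((b.equivFun α i * (n : Fq)) • B i) :=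
        (inv_smul_smul₀ hnc _).symm
      rw [h2]
      exact Submodule.smul_mem _ _ h1
  -- rank of conjSpan
  have hrank : ∀ α : Fqn,
      Module.finrank Fq (conjSpan Fq n α) = Nat.card {i : Fin n // b.equivFun α i ≠ 0} := by
    intro α
    rw [hspan α]
    have h1 : B '' {i | b.equivFun α i ≠ 0}
        = Set.range (fun i : {i : Fin n // b.equivFun α i ≠ 0} => B i) := by
      rw [Set.image_eq_range]
      rfl
    rw [h1, Nat.card_eq_fintype_card]
    exact finrank_span_eq_card
      (hind.comp ((↑) : {i : Fin n // b.equivFun α i ≠ 0} → Fin n) Subtype.coe_injective)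
  -- final counting
  have hEquiv : {α : Fqn // Module.finrank Fq (conjSpan Fq n α) = n - k}
      ≃ {c : Fin n → Fq // Nat.card {i : Fin n // c i ≠ 0} = n - k} := by
    apply b.equivFun.toEquiv.subtypeEquiv
    intro α
    rw [hrank α]
    rfl
  rw [Nat.card_congr hEquiv, count_aux, ← hq, Nat.choose_symm hk]
end
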